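/- arXiv:1811.07063 — 7 statements merged into one kernel-verified Lean document; each statement's English description precedes it below -/
import Mathlib

section
/- Let v_θ : ℂ → ℝ be the real inner product with e^{2πiθ}. A point p = ∑_k c^k ξ^{j_k} in Λ_{n,c} maximizes v_θ over Λ_{n,c} if and only if for every k, the term v_θ(c^k ξ^{j_k}) is maximal among {v_θ(c^k ξ^j) : j = 0,...,n-1}. -/
noncomputable def xi (n : ℕ) : ℂ := Complex.exp (2 * Real.pi * Complex.I / n)

noncomputable def limitSet (n : ℕ) (c : ℂ) : Set ℂ :=
  Set.range (fun j : ℕ → Fin n => ∑' k : ℕ, c ^ k * xi n ^ ((j k : ℕ)))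

noncomputable def v (θ : ℝ) (z : ℂ) : ℝ :=
  (z * Complex.exp (-(2 * Real.pi * Complex.I) * θ)).re

noncomputable def Lmap (θ : ℝ) : ℂ →L[ℝ] ℝ :=
  Complex.reCLM.comp ((ContinuousLinearMap.mul ℝ ℂ).flip
    (Complex.exp (-(2 * Real.pi * Complex.I) * θ)))

lemma Lmap_apply (θ : ℝ) (z : ℂ) : Lmap θ z = v θ z := rfl

lemma abs_xi (n : ℕ) : ‖xi n‖ = 1 := by
  have h : (2 * Real.pi * Complex.I / n) = ((2 * Real.pi / n : ℝ) : ℂ) * Complex.I := by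
    push_cast
    ring
  rw [xi, h, Complex.norm_exp_ofReal_mul_I]

theorem extreme_iff_termwise_max (n : ℕ) (hn : 2 ≤ n) (c : ℂ)
    (hc0 : 0 < ‖c‖) (hc1 : ‖c‖ < 1) (θ : ℝ) (j : ℕ → Fin n) :
    (∀ w ∈ limitSet n c, v θ w ≤ v θ (∑' k : ℕ, c ^ k * xi n ^ ((j k : ℕ)))) ↔
      ∀ k : ℕ, ∀ j' : Fin n, v θ (c ^ k * xi n ^ ((j' : ℕ))) ≤ v θ (c ^ k * xi n ^ ((j k : ℕ))) := by
  have hsum : ∀ i : ℕ → Fin n, Summable (fun k : ℕ => c ^ k * xi n ^ ((i k : ℕ))) := by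
    intro i
    apply Summable.of_norm
    have hnorm : ∀ k : ℕ, ‖c ^ k * xi n ^ ((i k : ℕ))‖ = ‖c‖ ^ k := by
      intro k
      simp [map_mul, map_pow, abs_xi]
    simp only [hnorm]
    exact summable_geometric_of_lt_one (by positivity) hc1
  have hv : ∀ i : ℕ → Fin n,
      v θ (∑' k : ℕ, c ^ k * xi n ^ ((i k : ℕ))) = ∑' k : ℕ, v θ (c ^ k * xi n ^ ((i k : ℕ))) := by
    intro i
    have := (Lmap θ).map_tsum (hsum i)
    simpa only [Lmap_apply] using this
  have hvs : ∀ i : ℕ → Fin n, Summable (fun k : ℕ => v θ (c ^ k * xi n ^ ((i k : ℕ)))) := by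
    intro i
    have := ((Lmap θ).summable (hsum i))
    simpa only [Lmap_apply] using this
  constructor
  · intro h k j'
    set i := Function.update j k j' with hi
    have hw : (∑' m : ℕ, c ^ m * xi n ^ ((i m : ℕ))) ∈ limitSet n c := ⟨i, rfl⟩
    have hle := h _ hw
    rw [hv i, hv j, (hvs i).tsum_eq_add_tsum_ite k, (hvs j).tsum_eq_add_tsum_ite k] at hle
    have heq : (∑' m : ℕ, if m = k then 0 else v θ (c ^ m * xi n ^ ((i m : ℕ))))
        = ∑' m : ℕ, if m = k then 0 else v θ (c ^ m * xi n ^ ((j m : ℕ))) := by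
      congr 1
      funext m
      by_cases hm : m = k
      · simp [hm]
      · simp [hm, hi, Function.update_of_ne hm]
    rw [heq] at hle
    have hle2 := le_of_add_le_add_right hle
    simpa [hi] using hle2
  · intro h w hw
    obtain ⟨i, rfl⟩ := hw
    rw [hv i, hv j]
    exact Summable.tsum_le_tsum (fun k => h k (i k)) (hvs i) (hvs j)
end

section
/- If φ is irrational, then for every θ, the set of points of Λ_{n,c} lying on the supporting line at angle θ (i.e., maximizing v_θ over Λ_{n,c}) has cardinality 1 or 2. -/
open Complex Real

lemma xi_pow (n : ℕ) (j : ℕ) :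
    xi n ^ j = Complex.exp (2 * Real.pi * Complex.I * j / n) := by
  rw [xi, ← Complex.exp_nat_mul]
  ring_nf

lemma fin_sub_ne_int (n : ℕ) (a b : Fin n) (hab : a ≠ b) (m : ℤ)
    (key : ((a:ℕ):ℝ) - ((b:ℕ):ℝ) = m * n) : False := by
  have hn' : (0:ℝ) < n := by
    have : 0 < n := Nat.pos_of_ne_zero (by rintro rfl; exact absurd a.2 (by omega))
    exact_mod_cast this
  have hne : ((a:ℕ):ℝ) ≠ ((b:ℕ):ℝ) := by
    exact_mod_cast fun hh => hab (Fin.ext (by exact_mod_cast hh))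
  rcases eq_or_ne m 0 with rfl | hm0
  · simp at key; exact hne (by linarith)
  · have h1 : (1:ℝ) ≤ |(m:ℝ)| := by exact_mod_cast Int.one_le_abs hm0
    have hbn : ((b:ℕ):ℝ) < n := by exact_mod_cast b.2
    have han : ((a:ℕ):ℝ) < n := by exact_mod_cast a.2
    have ha0 : (0:ℝ) ≤ ((a:ℕ):ℝ) := Nat.cast_nonneg _
    have hb0 : (0:ℝ) ≤ ((b:ℕ):ℝ) := Nat.cast_nonneg _
    have habs : |((a:ℕ):ℝ) - ((b:ℕ):ℝ)| < n := by
      rw [abs_sub_lt_iff]; constructor <;> linarith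
    rw [key, abs_mul, abs_of_pos hn'] at habs
    nlinarith

lemma term_eq (n : ℕ) (hn : n ≠ 0) (r φ θ : ℝ) (c : ℂ)
    (hc : c = r * Complex.exp (2 * Real.pi * Complex.I * φ)) (k j : ℕ) :
    c ^ k * xi n ^ j * Complex.exp (-(2 * Real.pi * Complex.I) * θ)
      = (r ^ k : ℝ) * Complex.exp ((2 * Real.pi * (k * φ + j / n - θ) : ℝ) * Complex.I) := by
  rw [hc, xi_pow n, mul_pow, ← Complex.exp_nat_mul]
  have h2 : ∀ A B C : ℂ, (r:ℂ)^k * Complex.exp A * Complex.exp B * Complex.exp C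
      = (r:ℂ)^k * Complex.exp (A + B + C) := by
    intro A B C; rw [Complex.exp_add, Complex.exp_add]; ring
  rw [h2]
  push_cast
  congr 1
  have : (n : ℂ) ≠ 0 := by exact_mod_cast hn
  field_simp
  ring

lemma v_term (n : ℕ) (hn : n ≠ 0) (r φ θ : ℝ) (c : ℂ)
    (hc : c = r * Complex.exp (2 * Real.pi * Complex.I * φ)) (k j : ℕ) :
    (c ^ k * xi n ^ j * Complex.exp (-(2 * Real.pi * Complex.I) * θ)).re
      = r ^ k * Real.cos (2 * Real.pi * (k * φ + j / n - θ)) := by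
  rw [term_eq n hn r φ θ c hc k j, Complex.re_ofReal_mul, Complex.exp_ofReal_mul_I_re]

lemma tie_cond (n : ℕ) (hn : n ≠ 0) (r φ θ : ℝ) (hr0 : 0 < r) (k : ℕ) (a b : Fin n)
    (hab : a ≠ b)
    (h : r ^ k * Real.cos (2 * Real.pi * (k * φ + (a:ℕ) / n - θ))
       = r ^ k * Real.cos (2 * Real.pi * (k * φ + (b:ℕ) / n - θ))) :
    ∃ m : ℤ, 2 * (k * φ - θ) + (((a:ℕ) + (b:ℕ) : ℕ) : ℝ) / n = m := by
  have hrk : (0:ℝ) < r ^ k := pow_pos hr0 k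
  have hcos : Real.cos (2 * Real.pi * (k * φ + (a:ℕ) / n - θ))
      = Real.cos (2 * Real.pi * (k * φ + (b:ℕ) / n - θ)) :=
    mul_left_cancel₀ hrk.ne' h
  rw [Real.cos_eq_cos_iff] at hcos
  have hπ : (0:ℝ) < Real.pi := Real.pi_pos
  have hn' : (0:ℝ) < n := by exact_mod_cast Nat.pos_of_ne_zero hn
  obtain ⟨m, hm | hm⟩ := hcos
  · exfalso
    apply fin_sub_ne_int n b a (Ne.symm hab) m
    field_simp at hm ⊢
    nlinarith [hm]
  · refine ⟨m, ?_⟩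
    push_cast
    field_simp at hm ⊢
    nlinarith [hm]

lemma no_two_ties (n : ℕ) (hn : n ≠ 0) (φ θ : ℝ) (hφ : Irrational φ)
    (k₁ k₂ : ℕ) (hk : k₁ ≠ k₂) (s₁ s₂ : ℕ) (m₁ m₂ : ℤ)
    (h₁ : 2 * (k₁ * φ - θ) + (s₁:ℝ) / n = m₁)
    (h₂ : 2 * (k₂ * φ - θ) + (s₂:ℝ) / n = m₂) : False := by
  have hn' : (0:ℝ) < n := by exact_mod_cast Nat.pos_of_ne_zero hn
  set q : ℚ := ((m₁ - m₂ : ℚ) - (s₁:ℚ)/n + (s₂:ℚ)/n) / (2*((k₁:ℚ) - k₂)) with hq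
  apply hφ
  refine ⟨q, ?_⟩
  have hkk : ((k₁:ℝ)) ≠ (k₂:ℝ) := by exact_mod_cast hk
  have h2k : (2:ℝ) * ((k₁:ℝ) - k₂) ≠ 0 := by
    intro hzero
    apply hkk; linarith [hzero]
  have hnQ : (n:ℚ) ≠ 0 := by exact_mod_cast hn
  rw [hq]
  push_cast
  rw [div_eq_iff (by push_cast [Int.subNatNat_eq_coe]; exact h2k)]
  have hne : (n:ℝ) ≠ 0 := hn'.ne'
  field_simp at h₁ h₂ ⊢
  linear_combination h₂ - h₁

-- subtracting two tie conditions at the same k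
lemma same_k_ties (n : ℕ) (hn : n ≠ 0) (φ θ : ℝ) (k : ℕ) (s₁ s₂ : ℕ) (m₁ m₂ : ℤ)
    (h₁ : 2 * (k * φ - θ) + (s₁:ℝ) / n = m₁)
    (h₂ : 2 * (k * φ - θ) + (s₂:ℝ) / n = m₂) :
    ((s₁:ℝ)) - (s₂:ℝ) = ((m₁ - m₂ : ℤ) : ℝ) * n := by
  have hn' : (0:ℝ) < n := by exact_mod_cast Nat.pos_of_ne_zero hn
  have hne : (n:ℝ) ≠ 0 := hn'.ne'
  push_cast
  field_simp at h₁ h₂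
  linear_combination h₁ - h₂

theorem irrational_extreme_card (n : ℕ) (hn : 2 ≤ n) (r φ : ℝ) (hr0 : 0 < r) (hr1 : r < 1)
    (hφ : Irrational φ) (c : ℂ) (hc : c = r * Complex.exp (2 * Real.pi * Complex.I * φ))
    (θ : ℝ) :
    ({p ∈ limitSet n c | ∀ w ∈ limitSet n c, v θ w ≤ v θ p}).ncard = 1 ∨
    ({p ∈ limitSet n c | ∀ w ∈ limitSet n c, v θ w ≤ v θ p}).ncard = 2 := by
  classical
  have hn0 : n ≠ 0 := by omega
  haveI : Nonempty (Fin n) := ⟨⟨0, by omega⟩⟩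
  set F : (ℕ → Fin n) → ℂ := fun j : ℕ → Fin n => ∑' k : ℕ, c ^ k * xi n ^ ((j k : ℕ)) with hF
  have hLS : limitSet n c = Set.range F := rfl
  set e : ℂ := Complex.exp (-(2 * Real.pi * Complex.I) * θ) with he
  -- norms
  have hcabs : ‖c‖ = r := by
    rw [hc, norm_mul, Complex.norm_exp]
    simp [abs_of_pos hr0]
  have hxiabs : ‖xi n‖ = 1 := by
    rw [xi, Complex.norm_exp]
    norm_num [Complex.div_re]
  have hterm_norm : ∀ (k j : ℕ), ‖c ^ k * xi n ^ j‖ = r ^ k := by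
    intro k j
    rw [norm_mul, norm_pow, norm_pow]
    simp only [hcabs, hxiabs, one_pow, mul_one]
  have hgeom : Summable (fun k : ℕ => r ^ k) := summable_geometric_of_lt_one hr0.le hr1
  have hsum : ∀ j : ℕ → Fin n, Summable (fun k => c ^ k * xi n ^ ((j k : ℕ))) := by
    intro j
    exact Summable.of_norm_bounded hgeom (fun k => le_of_eq (hterm_norm k (j k)))
  -- the payoff function
  set g : ℕ → Fin n → ℝ :=
    fun k j => r ^ k * Real.cos (2 * Real.pi * (k * φ + (j : ℕ) / n - θ)) with hg
  have hvF : ∀ j : ℕ → Fin n, v θ (F j) = ∑' k, g k (j k) := by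
    intro j
    have h2 : Summable (fun k => (c ^ k * xi n ^ ((j k : ℕ))) * e) := (hsum j).mul_right e
    have h1 : F j * e = ∑' k, (c ^ k * xi n ^ ((j k : ℕ))) * e := (tsum_mul_right).symm
    calc v θ (F j) = (∑' k, (c ^ k * xi n ^ ((j k : ℕ))) * e).re := by
          rw [v, ← h1]
      _ = ∑' k, ((c ^ k * xi n ^ ((j k : ℕ))) * e).re := Complex.reCLM.map_tsum h2
      _ = ∑' k, g k (j k) := tsum_congr fun k => v_term n hn0 r φ θ c hc k (j k)
  have hgabs : ∀ (k : ℕ) (j : Fin n), |g k j| ≤ r ^ k := by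
    intro k j
    rw [hg, abs_mul, abs_of_pos (pow_pos hr0 k)]
    have := Real.abs_cos_le_one (2 * Real.pi * (k * φ + (j : ℕ) / n - θ))
    nlinarith [pow_pos hr0 k]
  have hgsum : ∀ j : ℕ → Fin n, Summable (fun k => g k (j k)) := by
    intro j
    exact Summable.of_norm_bounded hgeom (fun k => hgabs k (j k))
  -- maxima
  set M : ℕ → ℝ := fun k => Finset.univ.sup' Finset.univ_nonempty (g k) with hM
  have hM_le : ∀ (k : ℕ) (j : Fin n), g k j ≤ M k :=
    fun k j => Finset.le_sup' (g k) (Finset.mem_univ j)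
  have hM_ex : ∀ k, ∃ j : Fin n, M k = g k j := by
    intro k
    obtain ⟨j, _, hj⟩ := Finset.exists_mem_eq_sup' (Finset.univ_nonempty) (g k)
    exact ⟨j, hj⟩
  choose jstar hjstar using hM_ex
  have hMabs : ∀ k, ‖M k‖ ≤ r ^ k := by
    intro k; rw [hjstar k]; exact hgabs k (jstar k)
  have hMsum : Summable M := Summable.of_norm_bounded hgeom hMabs
  -- characterization of maximizers
  have hmax_iff : ∀ j : ℕ → Fin n,
      (∀ w ∈ limitSet n c, v θ w ≤ v θ (F j)) ↔ ∀ k, g k (j k) = M k := by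
    intro j
    constructor
    · intro hmax k
      have hstar : v θ (F (fun k => jstar k)) ≤ v θ (F j) := hmax _ ⟨_, rfl⟩
      rw [hvF, hvF] at hstar
      have h1 : (∑' k, M k) ≤ ∑' k, g k (j k) := by
        calc (∑' k, M k) = ∑' k, g k (jstar k) := tsum_congr hjstar
          _ ≤ ∑' k, g k (j k) := hstar
      have hd : Summable (fun k => M k - g k (j k)) := hMsum.sub (hgsum j)
      have hdz : (∑' k, (M k - g k (j k))) = 0 := by
        rw [Summable.tsum_sub hMsum (hgsum j)]
        have h2 : (∑' k, g k (j k)) ≤ ∑' k, M k :=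
          Summable.tsum_le_tsum (fun k => hM_le k (j k)) (hgsum j) hMsum
        linarith
      have hdk : M k - g k (j k) ≤ 0 := by
        calc M k - g k (j k) ≤ ∑' k, (M k - g k (j k)) :=
              Summable.le_tsum hd k (fun i _ => sub_nonneg.mpr (hM_le i (j i)))
          _ = 0 := hdz
      have := hM_le k (j k)
      linarith
    · intro hall w hw
      obtain ⟨j', rfl⟩ := hw
      rw [hvF, hvF]
      calc (∑' k, g k (j' k)) ≤ ∑' k, M k :=
            Summable.tsum_le_tsum (fun k => hM_le k (j' k)) (hgsum j') hMsum
        _ = ∑' k, g k (j k) := tsum_congr fun k => (hall k).symm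
  -- the argmax sets
  set A : ℕ → Finset (Fin n) := fun k => Finset.univ.filter (fun j => g k j = M k) with hA
  have hA_mem : ∀ (k : ℕ) (j : Fin n), j ∈ A k ↔ g k j = M k := by
    intro k j; simp [hA]
  have hA_ne : ∀ k, (A k).Nonempty := fun k => ⟨jstar k, (hA_mem k _).2 (hjstar k).symm⟩
  set j0 : ℕ → Fin n := fun k => (A k).min' (hA_ne k) with hj0
  set j1 : ℕ → Fin n := fun k => (A k).max' (hA_ne k) with hj1
  have hj0A : ∀ k, j0 k ∈ A k := fun k => (A k).min'_mem (hA_ne k)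
  have hj1A : ∀ k, j1 k ∈ A k := fun k => (A k).max'_mem (hA_ne k)
  -- tie condition from two distinct elements of A k
  have htie : ∀ (k : ℕ) (a b : Fin n), a ∈ A k → b ∈ A k → a ≠ b →
      ∃ m : ℤ, 2 * (k * φ - θ) + (((a:ℕ) + (b:ℕ) : ℕ) : ℝ) / n = m := by
    intro k a b ha hb hab
    refine tie_cond n hn0 r φ θ hr0 k a b hab ?_
    exact ((hA_mem k a).1 ha).trans ((hA_mem k b).1 hb).symm
  -- at most two elements in A k
  have hA_two : ∀ (k : ℕ) (a : Fin n), a ∈ A k → a = j0 k ∨ a = j1 k := by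
    intro k a ha
    by_contra hcon
    push_neg at hcon
    obtain ⟨h0, h1⟩ := hcon
    have hne01 : j0 k ≠ j1 k := by
      intro hEq
      have hle : a ≤ j1 k := Finset.le_max' _ _ ha
      have hge : j0 k ≤ a := Finset.min'_le _ _ ha
      exact h0 (le_antisymm (hEq ▸ hle) hge)
    obtain ⟨m₁, hm₁⟩ := htie k (j0 k) (j1 k) (hj0A k) (hj1A k) hne01
    obtain ⟨m₂, hm₂⟩ := htie k (j0 k) a (hj0A k) ha (Ne.symm h0)
    have hkey := same_k_ties n hn0 φ θ k _ _ m₁ m₂ hm₁ hm₂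
    push_cast at hkey
    exact fin_sub_ne_int n (j1 k) a (Ne.symm h1) (m₁ - m₂) (by push_cast; linarith)
  -- membership of the maximizer set
  have hSmem : ∀ p, p ∈ ({p ∈ limitSet n c | ∀ w ∈ limitSet n c, v θ w ≤ v θ p}) ↔
      ∃ j : ℕ → Fin n, F j = p ∧ ∀ k, j k ∈ A k := by
    intro p
    constructor
    · rintro ⟨⟨j, rfl⟩, hmax⟩
      exact ⟨j, rfl, fun k => (hA_mem k _).2 ((hmax_iff j).1 hmax k)⟩
    · rintro ⟨j, rfl, hj⟩
      exact ⟨⟨j, rfl⟩, (hmax_iff j).2 fun k => (hA_mem k _).1 (hj k)⟩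
  by_cases htie0 : ∀ k, j0 k = j1 k
  · -- no tie: unique maximizer
    left
    have hAone : ∀ (k : ℕ) (a : Fin n), a ∈ A k → a = j0 k := by
      intro k a ha
      rcases hA_two k a ha with h | h
      · exact h
      · rw [h, ← htie0 k]
    have : ({p ∈ limitSet n c | ∀ w ∈ limitSet n c, v θ w ≤ v θ p}) = {F j0} := by
      ext p
      rw [hSmem, Set.mem_singleton_iff]
      constructor
      · rintro ⟨j, rfl, hj⟩
        exact congrArg F (funext fun k => hAone k (j k) (hj k))
      · rintro rfl
        exact ⟨j0, rfl, hj0A⟩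
    rw [this, Set.ncard_singleton]
  · -- tie at exactly one k₀
    right
    push_neg at htie0
    obtain ⟨k₀, hk₀⟩ := htie0
    -- at any other k, A k is a singleton
    have hother : ∀ k, k ≠ k₀ → j1 k = j0 k := by
      intro k hkne
      by_contra hne
      obtain ⟨m₁, hm₁⟩ := htie k (j0 k) (j1 k) (hj0A k) (hj1A k) (Ne.symm hne)
      obtain ⟨m₂, hm₂⟩ := htie k₀ (j0 k₀) (j1 k₀) (hj0A k₀) (hj1A k₀) hk₀
      exact no_two_ties n hn0 φ θ hφ k k₀ hkne _ _ m₁ m₂ hm₁ hm₂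
    have hAone : ∀ k, k ≠ k₀ → ∀ a : Fin n, a ∈ A k → a = j0 k := by
      intro k hkne a ha
      rcases hA_two k a ha with h | h
      · exact h
      · rw [h, hother k hkne]
    -- S = {F j0, F j1}
    have hset : ({p ∈ limitSet n c | ∀ w ∈ limitSet n c, v θ w ≤ v θ p}) = {F j0, F j1} := by
      ext p
      rw [hSmem, Set.mem_insert_iff, Set.mem_singleton_iff]
      constructor
      · rintro ⟨j, rfl, hj⟩
        rcases hA_two k₀ (j k₀) (hj k₀) with h | h
        · left
          refine congrArg F (funext fun k => ?_)
          rcases eq_or_ne k k₀ with rfl | hkne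
          · exact h
          · exact hAone k hkne (j k) (hj k)
        · right
          refine congrArg F (funext fun k => ?_)
          rcases eq_or_ne k k₀ with rfl | hkne
          · exact h
          · rw [hAone k hkne (j k) (hj k), hother k hkne]
      · rintro (rfl | rfl)
        · exact ⟨j0, rfl, hj0A⟩
        · exact ⟨j1, rfl, hj1A⟩
    -- F j0 ≠ F j1
    have hc0 : c ≠ 0 := by
      rw [hc]
      exact mul_ne_zero (by exact_mod_cast hr0.ne') (Complex.exp_ne_zero _)
    have hxine : xi n ^ ((j1 k₀ : ℕ)) ≠ xi n ^ ((j0 k₀ : ℕ)) := by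
      intro hEq
      have hprim := Complex.isPrimitiveRoot_exp n hn0
      have : ((j1 k₀ : ℕ)) = ((j0 k₀ : ℕ)) := hprim.pow_inj (j1 k₀).2 (j0 k₀).2 hEq
      exact hk₀ (Fin.ext this.symm)
    have hFne : F j0 ≠ F j1 := by
      intro hEq
      have hdiff : F j1 - F j0 = ∑' k, (c ^ k * xi n ^ ((j1 k : ℕ)) - c ^ k * xi n ^ ((j0 k : ℕ))) :=
        (Summable.tsum_sub (hsum j1) (hsum j0)).symm
      have hsingle : (∑' k, (c ^ k * xi n ^ ((j1 k : ℕ)) - c ^ k * xi n ^ ((j0 k : ℕ))))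
          = c ^ k₀ * xi n ^ ((j1 k₀ : ℕ)) - c ^ k₀ * xi n ^ ((j0 k₀ : ℕ)) := by
        refine tsum_eq_single k₀ fun k hkne => ?_
        rw [hother k hkne]
        ring
      have : c ^ k₀ * xi n ^ ((j1 k₀ : ℕ)) - c ^ k₀ * xi n ^ ((j0 k₀ : ℕ)) = 0 := by
        rw [← hsingle, ← hdiff, hEq, sub_self]
      have h2 : c ^ k₀ * (xi n ^ ((j1 k₀ : ℕ)) - xi n ^ ((j0 k₀ : ℕ))) = 0 := by
        rw [mul_sub]; exact this
      rcases mul_eq_zero.1 h2 with h | h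
      · exact pow_ne_zero k₀ hc0 h
      · exact hxine (sub_eq_zero.1 h)
    rw [hset]
    exact Set.ncard_pair hFne
end

section
/- If φ is irrational, then for every θ of the form θ = ℓφ (mod 1) with ℓ ∈ ℤ, there is exactly one point of Λ_{n,c} maximizing v_θ; consequently the set of angles θ with a unique extreme point is dense in [0,1]. -/
namespace UED


noncomputable def g (n : ℕ) (θ : ℝ) (j : ℕ) : ℝ :=
  (xi n ^ j * Complex.exp (-(2 * Real.pi * Complex.I) * θ)).re

lemma g_eq_cos {n : ℕ} (hn : n ≠ 0) (θ : ℝ) (j : ℕ) :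
    g n θ j = Real.cos (2 * Real.pi * ((j : ℝ) / n - θ)) := by
  have hn' : (n : ℂ) ≠ 0 := Nat.cast_ne_zero.mpr hn
  have h1 : xi n ^ j * Complex.exp (-(2 * Real.pi * Complex.I) * θ)
      = Complex.exp (((2 * Real.pi * ((j : ℝ) / n - θ) : ℝ) : ℂ) * Complex.I) := by
    rw [xi, ← Complex.exp_nat_mul, ← Complex.exp_add]
    congr 1
    push_cast
    field_simp
    ring
  rw [g, h1, Complex.exp_ofReal_mul_I_re]

lemma v_int_add (θ : ℝ) (m : ℤ) (z : ℂ) : v (θ + m) z = v θ z := by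
  unfold v
  congr 2
  push_cast
  rw [mul_add, Complex.exp_add]
  have h : Complex.exp (-(2 * Real.pi * Complex.I) * m) = 1 := by
    rw [← Complex.exp_int_mul_two_pi_mul_I (-m)]
    congr 1
    push_cast
    ring
  rw [h, mul_one]

lemma v_split {r φ : ℝ} {c : ℂ} (hc : c = r * Complex.exp (2 * Real.pi * Complex.I * φ))
    (n : ℕ) (θ : ℝ) (j : ℕ) (z : ℂ) :
    v θ (c * z + xi n ^ j) = r * v (θ - φ) z + g n θ j := by
  have he : Complex.exp (2 * Real.pi * Complex.I * φ) *
      Complex.exp (-(2 * Real.pi * Complex.I) * θ) =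
      Complex.exp (-(2 * Real.pi * Complex.I) * ((θ - φ : ℝ) : ℂ)) := by
    rw [← Complex.exp_add]
    congr 1
    push_cast
    ring
  have key : (c * z + xi n ^ j) * Complex.exp (-(2 * Real.pi * Complex.I) * θ)
      = (r : ℂ) * (z * Complex.exp (-(2 * Real.pi * Complex.I) * ((θ - φ : ℝ) : ℂ))) +
        xi n ^ j * Complex.exp (-(2 * Real.pi * Complex.I) * θ) := by
    rw [hc, ← he]; ring
  unfold v g
  rw [key, Complex.add_re, Complex.re_ofReal_mul]

lemma v_cont (θ : ℝ) : Continuous (v θ) :=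
  Complex.continuous_re.comp (continuous_id.mul continuous_const)

lemma exists_max {Λ : Set ℂ} (hne : Λ.Nonempty) (hcomp : IsCompact Λ) (θ : ℝ) :
    ∃ p ∈ Λ, ∀ w ∈ Λ, v θ w ≤ v θ p := by
  obtain ⟨p, hp, hmax⟩ := hcomp.exists_isMaxOn hne ((v_cont θ).continuousOn)
  exact ⟨p, hp, fun w hw => hmax hw⟩


lemma argmax_unique {n : ℕ} (hn : 2 ≤ n) {θ : ℝ}
    (hθ : (∃ m : ℤ, θ = (m : ℝ)) ∨ Irrational θ) (j j' : Fin n)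
    (hj : ∀ i : Fin n, g n θ i ≤ g n θ j)
    (hj' : ∀ i : Fin n, g n θ i ≤ g n θ j') : j = j' := by
  have hn0 : n ≠ 0 := by omega
  have hnR : (0 : ℝ) < n := by exact_mod_cast Nat.pos_of_ne_zero hn0
  have hπ : (0 : ℝ) < 2 * Real.pi := by positivity
  rcases hθ with ⟨m, rfl⟩ | hirr
  · -- integer angle: any argmax is 0
    have key : ∀ i : Fin n, (∀ i' : Fin n, g n (m : ℝ) i' ≤ g n (m : ℝ) i) → (i : ℕ) = 0 := by
      intro i hi
      have h0 : g n (m : ℝ) ((⟨0, by omega⟩ : Fin n) : ℕ) = 1 := by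
        rw [g_eq_cos hn0]
        norm_num
        rw [show 2 * Real.pi * (m : ℝ) = (m : ℝ) * (2 * Real.pi) by ring]
        exact Real.cos_int_mul_two_pi m
      have h1 : g n (m : ℝ) i = 1 := by
        refine le_antisymm ?_ ?_
        · rw [g_eq_cos hn0]; exact Real.cos_le_one _
        · rw [← h0]; exact hi ⟨0, by omega⟩
      rw [g_eq_cos hn0] at h1
      obtain ⟨t, ht⟩ := (Real.cos_eq_one_iff _).1 h1
      have h2 : (2 * Real.pi) * ((i : ℝ) / n - m) = (2 * Real.pi) * t := by linarith [ht]
      have h3 : (i : ℝ) / n - m = t := mul_left_cancel₀ (ne_of_gt hπ) h2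
      have h4 : (i : ℝ) = (t + m) * n := by field_simp at h3; linarith
      have h5 : ((i : ℕ) : ℤ) = (t + m) * n := by exact_mod_cast h4
      have hi1 : ((i : ℕ) : ℤ) < n := by exact_mod_cast i.2
      have hi0 : (0 : ℤ) ≤ ((i : ℕ) : ℤ) := Int.ofNat_nonneg _
      have hnZ : (0 : ℤ) < n := by exact_mod_cast Nat.pos_of_ne_zero hn0
      rcases lt_trichotomy (t + m) 0 with h | h | h
      · have : (t + m) * n ≤ (-1) * n := mul_le_mul_of_nonneg_right (by omega) (le_of_lt hnZ)
        exfalso; linarith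
      · rw [h] at h5; simpa using h5
      · have : 1 * n ≤ (t + m) * n := mul_le_mul_of_nonneg_right (by omega) (le_of_lt hnZ)
        exfalso; linarith
    have e1 := key j hj
    have e2 := key j' hj'
    exact Fin.ext (by omega)
  · have heq : Real.cos (2 * Real.pi * ((j : ℝ) / n - θ))
        = Real.cos (2 * Real.pi * ((j' : ℝ) / n - θ)) := by
      have := le_antisymm (hj' j) (hj j')
      rwa [g_eq_cos hn0, g_eq_cos hn0] at this
    obtain ⟨k, hk | hk⟩ := Real.cos_eq_cos_iff.1 heq
    · -- 2π(j'/n - θ) = 2kπ + 2π(j/n - θ)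
      have h2 : (2 * Real.pi) * ((j' : ℝ) / n) = (2 * Real.pi) * (k + (j : ℝ) / n) := by
        ring_nf at hk ⊢
        linarith [hk]
      have h3 : ((j' : ℝ) / n) = k + (j : ℝ) / n := mul_left_cancel₀ (ne_of_gt hπ) h2
      have h4 : ((j' : ℝ)) = k * n + j := by field_simp at h3; linarith
      have h5 : (((j' : ℕ)) : ℤ) = k * n + (j : ℕ) := by exact_mod_cast h4
      have hj1 : (((j : ℕ)) : ℤ) < n := by exact_mod_cast j.2
      have hj1' : (((j' : ℕ)) : ℤ) < n := by exact_mod_cast j'.2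
      have hj0 : (0 : ℤ) ≤ ((j : ℕ) : ℤ) := Int.ofNat_nonneg _
      have hj0' : (0 : ℤ) ≤ ((j' : ℕ) : ℤ) := Int.ofNat_nonneg _
      have hnZ : (0 : ℤ) < n := by exact_mod_cast Nat.pos_of_ne_zero hn0
      have hk0 : k = 0 := by
        rcases lt_trichotomy k 0 with h | h | h
        · have : k * n ≤ (-1) * n := mul_le_mul_of_nonneg_right (by omega) (le_of_lt hnZ)
          exfalso; linarith
        · exact h
        · have : 1 * n ≤ k * n := mul_le_mul_of_nonneg_right (by omega) (le_of_lt hnZ)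
          exfalso; linarith
      rw [hk0, zero_mul, zero_add] at h5
      exact Fin.ext (by exact_mod_cast h5.symm)
    · -- 2π(j'/n - θ) = 2kπ - 2π(j/n - θ)  ⇒ θ rational, contradiction
      exfalso
      have h2 : (2 * Real.pi) * (2 * θ) = (2 * Real.pi) * ((j : ℝ) / n + (j' : ℝ) / n - k) := by
        ring_nf at hk ⊢
        linarith [hk]
      have h3 : 2 * θ = (j : ℝ) / n + (j' : ℝ) / n - k := mul_left_cancel₀ (ne_of_gt hπ) h2
      set q : ℚ := (((j : ℕ) : ℚ) + ((j' : ℕ) : ℚ) - k * n) / (2 * n) with hq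
      apply hirr
      refine ⟨q, ?_⟩
      have hcast : (q : ℝ) = ((j : ℝ) + (j' : ℝ) - k * n) / (2 * n) := by
        rw [hq]; push_cast; ring
      rw [hcast]
      rw [div_eq_iff (by positivity)]
      field_simp at h3
      ring_nf at h3 ⊢
      linarith

lemma step {n : ℕ} (hn : 2 ≤ n) {r φ : ℝ} (hr0 : 0 < r) {c : ℂ}
    (hc : c = r * Complex.exp (2 * Real.pi * Complex.I * φ)) {Λ : Set ℂ}
    (hne : Λ.Nonempty) (hcomp : IsCompact Λ)
    (hinv : Λ = ⋃ j : Fin n, (fun z => c * z + xi n ^ (j : ℕ)) '' Λ)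
    {θ : ℝ} (hθ : (∃ m : ℤ, θ = (m : ℝ)) ∨ Irrational θ)
    {p q : ℂ} (hp : p ∈ Λ ∧ ∀ w ∈ Λ, v θ w ≤ v θ p)
    (hq : q ∈ Λ ∧ ∀ w ∈ Λ, v θ w ≤ v θ q) :
    ∃ p' q', (p' ∈ Λ ∧ ∀ w ∈ Λ, v (θ - φ) w ≤ v (θ - φ) p') ∧
      (q' ∈ Λ ∧ ∀ w ∈ Λ, v (θ - φ) w ≤ v (θ - φ) q') ∧ p - q = c * (p' - q') := by
  have hn0 : n ≠ 0 := by omega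
  haveI : NeZero n := ⟨hn0⟩
  obtain ⟨z0, hz0Λ, hz0⟩ := exists_max hne hcomp (θ - φ)
  obtain ⟨js, hjs⟩ := Finite.exists_max (fun j : Fin n => g n θ (j : ℕ))
  have hdec : ∀ x ∈ Λ, ∃ (j : Fin n) (x' : ℂ), x' ∈ Λ ∧ x = c * x' + xi n ^ (j : ℕ) := by
    intro x hx
    rw [hinv] at hx
    simp only [Set.mem_iUnion, Set.mem_image] at hx
    obtain ⟨j, x', hx', hxx⟩ := hx
    exact ⟨j, x', hx', hxx.symm⟩
  have hmem : ∀ (j : Fin n) (x : ℂ), x ∈ Λ → c * x + xi n ^ (j : ℕ) ∈ Λ := by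
    intro j x hx
    rw [hinv]
    exact Set.mem_iUnion.2 ⟨j, Set.mem_image_of_mem _ hx⟩
  -- the competitor
  have hwΛ : c * z0 + xi n ^ (js : ℕ) ∈ Λ := hmem js z0 hz0Λ
  -- analyze a maximizer
  have main : ∀ x : ℂ, x ∈ Λ → (∀ w ∈ Λ, v θ w ≤ v θ x) →
      ∃ x', (x' ∈ Λ ∧ ∀ w ∈ Λ, v (θ - φ) w ≤ v (θ - φ) x') ∧
        x = c * x' + xi n ^ (js : ℕ) := by
    intro x hxΛ hxmax
    obtain ⟨j, x', hx'Λ, hxeq⟩ := hdec x hxΛ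
    have hvx : v θ x = r * v (θ - φ) x' + g n θ (j : ℕ) := by rw [hxeq]; exact v_split hc n θ _ _
    have hvw : v θ (c * z0 + xi n ^ (js : ℕ)) = r * v (θ - φ) z0 + g n θ (js : ℕ) :=
      v_split hc n θ _ _
    have hle : v θ (c * z0 + xi n ^ (js : ℕ)) ≤ v θ x := hxmax _ hwΛ
    have a1 : v (θ - φ) x' ≤ v (θ - φ) z0 := hz0 x' hx'Λ
    have a2 : g n θ (j : ℕ) ≤ g n θ (js : ℕ) := hjs j
    have a3 : r * v (θ - φ) x' ≤ r * v (θ - φ) z0 := mul_le_mul_of_nonneg_left a1 hr0.le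
    have e2 : g n θ (j : ℕ) = g n θ (js : ℕ) := by
      rw [hvx, hvw] at hle; linarith
    have e1 : v (θ - φ) x' = v (θ - φ) z0 := by
      rw [hvx, hvw] at hle
      have : r * v (θ - φ) z0 ≤ r * v (θ - φ) x' := by linarith
      exact le_antisymm a1 (le_of_mul_le_mul_left this hr0)
    have hjmax : ∀ i : Fin n, g n θ (i : ℕ) ≤ g n θ (j : ℕ) := by
      intro i; rw [e2]; exact hjs i
    have hjeq : j = js := argmax_unique hn hθ j js hjmax hjs
    refine ⟨x', ⟨hx'Λ, fun w hw => ?_⟩, by rw [hxeq, hjeq]⟩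
    rw [e1]; exact hz0 w hw
  obtain ⟨p', hp', hpe⟩ := main p hp.1 hp.2
  obtain ⟨q', hq', hqe⟩ := main q hq.1 hq.2
  exact ⟨p', q', hp', hq', by rw [hpe, hqe]; ring⟩

lemma unique_at {n : ℕ} (hn : 2 ≤ n) {r φ : ℝ} (hr0 : 0 < r) (hr1 : r < 1)
    (hφ : Irrational φ) {c : ℂ}
    (hc : c = r * Complex.exp (2 * Real.pi * Complex.I * φ)) {Λ : Set ℂ}
    (hne : Λ.Nonempty) (hcomp : IsCompact Λ)
    (hinv : Λ = ⋃ j : Fin n, (fun z => c * z + xi n ^ (j : ℕ)) '' Λ) (ℓ : ℤ) :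
    ∃! p : ℂ, p ∈ Λ ∧ ∀ w ∈ Λ, v ((ℓ : ℝ) * φ) w ≤ v ((ℓ : ℝ) * φ) p := by
  obtain ⟨p, hpΛ, hpm⟩ := exists_max hne hcomp ((ℓ : ℝ) * φ)
  refine ⟨p, ⟨hpΛ, hpm⟩, ?_⟩
  rintro q ⟨hqΛ, hqm⟩
  set θk : ℕ → ℝ := fun k => ((ℓ - k : ℤ) : ℝ) * φ with hθk
  have hθ0 : θk 0 = (ℓ : ℝ) * φ := by simp [hθk]
  have hθsub : ∀ k : ℕ, θk k - φ = θk (k + 1) := by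
    intro k; simp only [hθk]; push_cast; ring
  have hθgood : ∀ k : ℕ, (∃ m : ℤ, θk k = (m : ℝ)) ∨ Irrational (θk k) := by
    intro k
    rcases eq_or_ne (ℓ - k) 0 with h | h
    · exact Or.inl ⟨0, by simp only [hθk]; rw [h]; simp⟩
    · exact Or.inr (by simpa [hθk] using hφ.intCast_mul h)
  have iter : ∀ k : ℕ, ∃ a b : ℂ,
      (a ∈ Λ ∧ ∀ w ∈ Λ, v (θk k) w ≤ v (θk k) a) ∧
      (b ∈ Λ ∧ ∀ w ∈ Λ, v (θk k) w ≤ v (θk k) b) ∧ q - p = c ^ k * (a - b) := by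
    intro k
    induction k with
    | zero =>
      refine ⟨q, p, ?_, ?_, by simp⟩
      · rw [hθ0]; exact ⟨hqΛ, hqm⟩
      · rw [hθ0]; exact ⟨hpΛ, hpm⟩
    | succ k ih =>
      obtain ⟨a, b, ha, hb, hab⟩ := ih
      obtain ⟨a', b', ha', hb', h'⟩ := step hn hr0 hc hne hcomp hinv (hθgood k) ha hb
      rw [hθsub k] at ha' hb'
      exact ⟨a', b', ha', hb', by rw [hab, h', pow_succ]; ring⟩
  obtain ⟨R, hR⟩ := hcomp.isBounded.exists_norm_le
  have hcn : ‖c‖ = r := by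
    rw [hc, norm_mul, Complex.norm_real]
    rw [show (2 : ℂ) * (Real.pi : ℂ) * Complex.I * (φ : ℂ)
        = ((2 * Real.pi * φ : ℝ) : ℂ) * Complex.I by push_cast; ring]
    rw [Complex.norm_exp_ofReal_mul_I]
    simp [abs_of_pos hr0]
  have hbound : ∀ k : ℕ, ‖q - p‖ ≤ r ^ k * (R + R) := by
    intro k
    obtain ⟨a, b, ha, hb, hab⟩ := iter k
    have h1 : ‖a - b‖ ≤ R + R := (norm_sub_le a b).trans (add_le_add (hR a ha.1) (hR b hb.1))
    calc ‖q - p‖ = ‖c‖ ^ k * ‖a - b‖ := by rw [hab, norm_mul, norm_pow]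
    _ ≤ r ^ k * (R + R) := by
        rw [hcn]; exact mul_le_mul_of_nonneg_left h1 (pow_nonneg hr0.le k)
  have htend : Filter.Tendsto (fun k : ℕ => r ^ k * (R + R)) Filter.atTop (nhds 0) := by
    simpa using (tendsto_pow_atTop_nhds_zero_of_lt_one hr0.le hr1).mul_const (R + R)
  have hle0 : ‖q - p‖ ≤ 0 := ge_of_tendsto' htend hbound
  have := norm_le_zero_iff.mp hle0
  exact sub_eq_zero.mp this

def T (φ : ℝ) : AddSubgroup ℝ where
  carrier := {x | ∃ ℓ m : ℤ, x = ℓ * φ + m}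
  zero_mem' := ⟨0, 0, by norm_num⟩
  add_mem' := by
    rintro a b ⟨ℓ1, m1, rfl⟩ ⟨ℓ2, m2, rfl⟩
    exact ⟨ℓ1 + ℓ2, m1 + m2, by push_cast; ring⟩
  neg_mem' := by
    rintro a ⟨ℓ1, m1, rfl⟩
    exact ⟨-ℓ1, -m1, by push_cast; ring⟩

lemma denseT {φ : ℝ} (hφ : Irrational φ) : Dense (T φ : Set ℝ) := by
  rcases (T φ).dense_or_cyclic with h | ⟨a, ha⟩
  · exact h
  · exfalso
    have h1 : (1 : ℝ) ∈ T φ := ⟨0, 1, by norm_num⟩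
    have h2 : φ ∈ T φ := ⟨1, 0, by norm_num⟩
    rw [ha, AddSubgroup.mem_closure_singleton] at h1 h2
    obtain ⟨pz, hp⟩ := h1
    obtain ⟨qz, hq⟩ := h2
    have hpa : (pz : ℝ) * a = 1 := by simpa [zsmul_eq_mul] using hp
    have hqa : (qz : ℝ) * a = φ := by simpa [zsmul_eq_mul] using hq
    have hpz : pz ≠ 0 := by rintro rfl; norm_num at hpa
    have hkey : (pz : ℝ) * φ = (qz : ℝ) := by
      calc (pz : ℝ) * φ = (pz : ℝ) * ((qz : ℝ) * a) := by rw [hqa]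
      _ = (qz : ℝ) * ((pz : ℝ) * a) := by ring
      _ = (qz : ℝ) := by rw [hpa, mul_one]
    exact (hφ.intCast_mul hpz) ⟨(qz : ℚ), by exact_mod_cast hkey.symm⟩

end UED

theorem unique_extreme_dense (n : ℕ) (hn : 2 ≤ n) (r φ : ℝ) (hr0 : 0 < r) (hr1 : r < 1)
    (hφ : Irrational φ) (c : ℂ) (hc : c = r * Complex.exp (2 * Real.pi * Complex.I * φ))
    (Λ : Set ℂ) (hne : Λ.Nonempty) (hcomp : IsCompact Λ)
    (hinv : Λ = ⋃ j : Fin n, (fun z => c * z + xi n ^ (j : ℕ)) '' Λ) :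
    (∀ ℓ : ℤ, ∃! p : ℂ, p ∈ Λ ∧ ∀ w ∈ Λ, v ((ℓ : ℝ) * φ) w ≤ v ((ℓ : ℝ) * φ) p) ∧
    Dense {θ : ℝ | ∃! p : ℂ, p ∈ Λ ∧ ∀ w ∈ Λ, v θ w ≤ v θ p} := by
  constructor
  · exact fun ℓ => UED.unique_at hn hr0 hr1 hφ hc hne hcomp hinv ℓ
  · have hsub : (UED.T φ : Set ℝ) ⊆ {θ : ℝ | ∃! p : ℂ, p ∈ Λ ∧ ∀ w ∈ Λ, v θ w ≤ v θ p} := by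
      rintro x ⟨ℓ, m, rfl⟩
      have h1 := UED.unique_at hn hr0 hr1 hφ hc hne hcomp hinv ℓ
      simp only [Set.mem_setOf_eq]
      have hv : ∀ z : ℂ, v ((ℓ : ℝ) * φ + (m : ℝ)) z = v ((ℓ : ℝ) * φ) z :=
        fun z => UED.v_int_add ((ℓ : ℝ) * φ) m z
      simp only [hv]
      exact h1
    exact (UED.denseT hφ).mono hsub
end

section
/- If φ is irrational, then Λ_{n,c} is not convex. -/
noncomputable def LL (θ : ℝ) (z : ℂ) : ℝ := (z * Complex.exp (-(θ:ℂ) * Complex.I)).re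

lemma LL_add (θ : ℝ) (z w : ℂ) : LL θ (z + w) = LL θ z + LL θ w := by
  simp [LL, add_mul]

lemma LL_smul (θ t : ℝ) (z : ℂ) : LL θ (t • z) = t * LL θ z := by
  simp [LL, Complex.real_smul, mul_assoc, Complex.re_ofReal_mul]

lemma LL_cont (θ : ℝ) : Continuous (LL θ) :=
  Complex.continuous_re.comp ((continuous_id.mul continuous_const))

lemma LL_cos (n : ℕ) (hn : 0 < n) (θ : ℝ) (j : ℕ) :
    LL θ (xi n ^ j) = Real.cos (2 * Real.pi * j / n - θ) := by
  have hn' : (n : ℂ) ≠ 0 := by exact_mod_cast hn.ne'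
  have h1 : xi n ^ j = Complex.exp ((j : ℂ) * (2 * Real.pi * Complex.I / n)) := by
    rw [xi, Complex.exp_nat_mul]
  have h2 : (j : ℂ) * (2 * Real.pi * Complex.I / n) + (-(θ:ℂ) * Complex.I)
      = ((2 * Real.pi * j / n - θ : ℝ) : ℂ) * Complex.I := by
    push_cast
    field_simp
    ring
  rw [LL, h1, ← Complex.exp_add, h2, Complex.exp_ofReal_mul_I_re]

lemma LL_c (r φ θ : ℝ) (w : ℂ) :
    LL θ ((r : ℂ) * Complex.exp (2 * Real.pi * Complex.I * φ) * w)
      = r * LL (θ - 2 * Real.pi * φ) w := by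
  have h1 : (r : ℂ) * Complex.exp (2 * Real.pi * Complex.I * φ) * w * Complex.exp (-(θ:ℂ) * Complex.I)
      = (r : ℂ) * (w * Complex.exp (-((θ - 2 * Real.pi * φ : ℝ) : ℂ) * Complex.I)) := by
    rw [show ((r:ℂ) * Complex.exp (2 * Real.pi * Complex.I * φ) * w * Complex.exp (-(θ:ℂ) * Complex.I))
        = (r:ℂ) * (w * (Complex.exp (2 * Real.pi * Complex.I * φ) * Complex.exp (-(θ:ℂ) * Complex.I))) by ring,
      ← Complex.exp_add]
    congr 2
    push_cast
    ring
  rw [LL, h1, Complex.re_ofReal_mul, LL]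


lemma cos_max_aux (n : ℕ) (hn : 2 ≤ n) (j : ℕ) (hj : j < n) :
    Real.cos (2*Real.pi*j/n - Real.pi/n) ≤ Real.cos (Real.pi/n) := by
  have hπ := Real.pi_pos
  have hn' : (0:ℝ) < n := by positivity
  rcases Nat.eq_zero_or_pos j with h0 | h1
  · subst h0
    simp only [Nat.cast_zero, mul_zero, zero_div, zero_sub, Real.cos_neg]
    exact le_rfl
  · set x : ℝ := 2 * Real.pi * (j : ℝ) / n - Real.pi / n with hx
    have hj1 : (1:ℝ) ≤ (j : ℝ) := by exact_mod_cast h1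
    have hjn : (j : ℝ) ≤ (n:ℝ) - 1 := by
      have h2 : ((j + 1 : ℕ) : ℝ) ≤ (n : ℝ) := by exact_mod_cast hj
      push_cast at h2
      linarith
    have hx1 : Real.pi / n ≤ x := by
      rw [hx, div_sub_div_same, le_div_iff₀ hn', div_mul_cancel₀ _ hn'.ne']
      nlinarith
    have hx2 : x ≤ 2 * Real.pi - Real.pi / n := by
      have hdiv : (Real.pi/(n:ℝ))*n = Real.pi := div_mul_cancel₀ _ hn'.ne'
      rw [hx, div_sub_div_same, div_le_iff₀ hn']
      nlinarith [hdiv, mul_le_mul_of_nonneg_left hjn (by positivity : (0:ℝ) ≤ 2*Real.pi)]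
    rcases le_or_gt x Real.pi with hxπ | hxπ
    · exact Real.cos_le_cos_of_nonneg_of_le_pi (by positivity) hxπ hx1
    · rw [← Real.cos_two_pi_sub]
      exact Real.cos_le_cos_of_nonneg_of_le_pi (x := Real.pi/(n:ℝ)) (y := 2*Real.pi - x)
        (by positivity) (by linarith) (by linarith)

set_option maxHeartbeats 1000000 in
theorem irrational_not_convex (n : ℕ) (hn : 2 ≤ n) (r φ : ℝ) (hr0 : 0 < r) (hr1 : r < 1)
    (hφ : Irrational φ) (c : ℂ) (hc : c = r * Complex.exp (2 * Real.pi * Complex.I * φ))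
    (Λ : Set ℂ) (hne : Λ.Nonempty) (hcomp : IsCompact Λ)
    (hinv : Λ = ⋃ j : Fin n, (fun z => c * z + xi n ^ (j : ℕ)) '' Λ) :
    ¬ Convex ℝ Λ := by
  intro hconv
  have hnpos' : 0 < n := by omega
  have hnpos : 0 < n := by omega
  set α : ℝ := 2 * Real.pi * φ with hα
  set ξ : ℂ := xi n with hξ
  set θ₀ : ℝ := Real.pi / n with hθ₀
  -- face predicate
  set F : ℝ → ℂ → Prop := fun θ z => z ∈ Λ ∧ ∀ w ∈ Λ, LL θ w ≤ LL θ z with hF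
  have hFne : ∀ θ, ∃ z, F θ z := by
    intro θ
    obtain ⟨z, hz, hmax⟩ := hcomp.exists_isMaxOn hne (LL_cont θ).continuousOn
    exact ⟨z, hz, fun w hw => hmax hw⟩
  have hmemΛ : ∀ (w : ℂ) (j : Fin n), w ∈ Λ → c * w + ξ ^ (j : ℕ) ∈ Λ := by
    intro w j hw
    rw [hinv]
    exact Set.mem_iUnion.2 ⟨j, ⟨w, hw, rfl⟩⟩
  have hdecomp : ∀ z ∈ Λ, ∃ (j : Fin n) (w : ℂ), w ∈ Λ ∧ z = c * w + ξ ^ (j : ℕ) := by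
    intro z hz
    rw [hinv] at hz
    obtain ⟨j, w, hw, hzw⟩ := Set.mem_iUnion.1 hz
    exact ⟨j, w, hw, hzw.symm⟩
  have hLc : ∀ (θ : ℝ) (w : ℂ), LL θ (c * w) = r * LL (θ - α) w := by
    intro θ w
    rw [hc, hα]
    exact LL_c r φ θ w
  -- pull: maximizers decompose into maximizers
  have pull : ∀ θ z, F θ z → ∃ (j : Fin n) (w : ℂ), F (θ - α) w ∧ z = c * w + ξ ^ (j : ℕ)
      ∧ ∀ j' : Fin n, LL θ (ξ ^ (j' : ℕ)) ≤ LL θ (ξ ^ (j : ℕ)) := by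
    intro θ z hz
    obtain ⟨hzΛ, hzmax⟩ := hz
    obtain ⟨j, w, hw, hzw⟩ := hdecomp z hzΛ
    obtain ⟨w', hw', hw'max⟩ := hFne (θ - α)
    obtain ⟨j', -, hj'max⟩ := Finset.exists_max_image Finset.univ
      (fun j : Fin n => LL θ (ξ ^ (j : ℕ))) ⟨⟨0, hnpos⟩, Finset.mem_univ _⟩
    have hw'Λ := hw'
    have hzval : LL θ z = r * LL (θ - α) w + LL θ (ξ ^ (j : ℕ)) := by
      rw [hzw, LL_add, hLc]
    have h1 : LL θ (c * w' + ξ ^ (j' : ℕ)) ≤ LL θ z :=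
      hzmax _ (hmemΛ w' j' hw'Λ)
    have h1' : r * LL (θ - α) w' + LL θ (ξ ^ (j' : ℕ)) ≤ r * LL (θ - α) w + LL θ (ξ ^ (j : ℕ)) := by
      rw [← hzval]
      rw [LL_add, hLc] at h1
      exact h1
    have haw : LL (θ - α) w ≤ LL (θ - α) w' := hw'max w hw
    have hbj : LL θ (ξ ^ (j : ℕ)) ≤ LL θ (ξ ^ (j' : ℕ)) := hj'max j (Finset.mem_univ _)
    have e1 : LL (θ - α) w = LL (θ - α) w' := by nlinarith
    have e2 : LL θ (ξ ^ (j : ℕ)) = LL θ (ξ ^ (j' : ℕ)) := by nlinarith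
    refine ⟨j, w, ⟨hw, fun u hu => ?_⟩, hzw, fun j'' => ?_⟩
    · exact (hw'max u hu).trans e1.ge
    · exact (hj'max j'' (Finset.mem_univ _)).trans e2.ge
  -- push: maximizers combine to maximizers
  have push : ∀ θ (w : ℂ) (j : Fin n), F (θ - α) w →
      (∀ j' : Fin n, LL θ (ξ ^ (j' : ℕ)) ≤ LL θ (ξ ^ (j : ℕ))) → F θ (c * w + ξ ^ (j : ℕ)) := by
    intro θ w j hw hjmax
    refine ⟨hmemΛ w j hw.1, fun u hu => ?_⟩
    obtain ⟨j'', w'', hw'', rfl⟩ := hdecomp u hu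
    rw [LL_add, LL_add, hLc, hLc]
    exact add_le_add (mul_le_mul_of_nonneg_left (hw.2 w'' hw'') hr0.le) (hjmax j'')
  -- uniqueness of maximizing root at angles θ₀ - m α, m ≥ 1
  have huniq : ∀ m : ℕ, 1 ≤ m → ∀ j j' : Fin n,
      LL (θ₀ - m * α) (ξ ^ (j : ℕ)) = LL (θ₀ - m * α) (ξ ^ (j' : ℕ)) → j = j' := by
    intro m hm j j' hLLeq
    rw [LL_cos n hnpos, LL_cos n hnpos] at hLLeq
    rw [Real.cos_eq_cos_iff] at hLLeq
    have hn' : (n:ℝ) ≠ 0 := by positivity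
    have hπ : Real.pi ≠ 0 := Real.pi_ne_zero
    obtain ⟨k, hcase | hcase⟩ := hLLeq
    · have h2 : 2*Real.pi*((j':Fin n):ℝ)/n = 2*k*Real.pi + 2*Real.pi*((j:Fin n):ℝ)/n := by
        linarith [hcase]
      field_simp at h2
      have e2 : 2*Real.pi*((j':Fin n):ℝ) = 2*Real.pi*((k:ℝ)*n + ((j:Fin n):ℝ)) := by
        linear_combination (2*Real.pi) * h2
      have e : ((j':Fin n):ℝ) = (k:ℝ)*n + ((j:Fin n):ℝ) :=
        mul_left_cancel₀ (by positivity : (2*Real.pi) ≠ 0) e2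
      have eZ : ((j' : ℕ) : ℤ) = k * n + ((j : ℕ) : ℤ) := by exact_mod_cast e
      have hjlt : ((j : ℕ) : ℤ) < n := by exact_mod_cast j.isLt
      have hj'lt : ((j' : ℕ) : ℤ) < n := by exact_mod_cast j'.isLt
      have hjnn : (0:ℤ) ≤ ((j : ℕ) : ℤ) := Int.natCast_nonneg _
      have hj'nn : (0:ℤ) ≤ ((j' : ℕ) : ℤ) := Int.natCast_nonneg _
      have hnZ : (0:ℤ) < n := by exact_mod_cast hnpos
      have hk0 : k = 0 := by
        rcases lt_trichotomy k 0 with hk | hk | hk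
        · have h1 : k * (n:ℤ) ≤ (-1) * n := mul_le_mul_of_nonneg_right (by omega) hnZ.le
          linarith
        · exact hk
        · have h1 : (1:ℤ) * n ≤ k * n := mul_le_mul_of_nonneg_right (by omega) hnZ.le
          linarith
      rw [hk0] at eZ
      simp at eZ
      exact (Fin.ext (by exact_mod_cast eZ)).symm
    · exfalso
      rw [hθ₀, hα] at hcase
      have hm' : (m:ℝ) ≠ 0 := by positivity
      have hqval : φ = ((k*(n:ℤ) + 1 - ((j:ℕ):ℤ) - ((j':ℕ):ℤ) : ℤ) : ℝ) / (2*m*n) := by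
        field_simp at hcase ⊢
        push_cast
        nlinarith [Real.pi_pos]
      refine hφ ⟨((k*(n:ℤ) + 1 - ((j:ℕ):ℤ) - ((j':ℕ):ℤ) : ℤ) : ℚ) / (2*m*n : ℚ), ?_⟩
      rw [hqval]
      push_cast
      ring
  -- contraction
  obtain ⟨C, hC⟩ := Metric.isBounded_iff.1 hcomp.isBounded
  have key : ∀ (k m : ℕ), 1 ≤ m → ∀ z z', F (θ₀ - m * α) z → F (θ₀ - m * α) z' →
      dist z z' ≤ r ^ k * C := by
    intro k
    induction k with
    | zero =>
      intro m hm z z' hz hz'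
      simpa using hC hz.1 hz'.1
    | succ k ih =>
      intro m hm z z' hz hz'
      obtain ⟨j, w, hw, rfl, hjmax⟩ := pull _ z hz
      obtain ⟨j', w', hw', rfl, hj'max⟩ := pull _ z' hz'
      have hθeq : θ₀ - (m:ℝ) * α - α = θ₀ - ((m+1 : ℕ):ℝ) * α := by push_cast; ring
      rw [hθeq] at hw hw'
      have hjj' : j = j' := huniq m hm j j' (le_antisymm (hj'max j) (hjmax j'))
      subst hjj'
      have hcr : ‖c‖ = r := by
        rw [hc, norm_mul, Complex.norm_real, Real.norm_eq_abs,
          show (2 * (Real.pi:ℂ) * Complex.I * (φ:ℂ)) = ((2 * Real.pi * φ : ℝ) : ℂ) * Complex.I by push_cast; ring,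
          Complex.norm_exp_ofReal_mul_I, mul_one, abs_of_pos hr0]
      have hd : dist (c*w + ξ^(j:ℕ)) (c*w' + ξ^(j:ℕ)) = r * dist w w' := by
        rw [Complex.dist_eq, Complex.dist_eq,
          show c*w + ξ^(j:ℕ) - (c*w' + ξ^(j:ℕ)) = c*(w - w') by ring, norm_mul, hcr]
      rw [hd, pow_succ, mul_comm (r^k) r, mul_assoc]
      exact mul_le_mul_of_nonneg_left (ih (m+1) (by omega) w w' hw hw') hr0.le
  -- the face at θ₀ - α is a single point
  have hsing : ∀ z z', F (θ₀ - α) z → F (θ₀ - α) z' → z = z' := by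
    intro z z' hz hz'
    have h1a : θ₀ - α = θ₀ - ((1:ℕ):ℝ) * α := by push_cast; ring
    rw [h1a] at hz hz'
    have h0 : dist z z' ≤ 0 := by
      have hl : Filter.Tendsto (fun k : ℕ => r^k * C) Filter.atTop (nhds 0) := by
        simpa using (tendsto_pow_atTop_nhds_zero_of_lt_one hr0.le hr1).mul_const C
      exact ge_of_tendsto' hl (fun k => key k 1 le_rfl z z' hz hz')
    exact dist_le_zero.1 h0
  -- both j = 0 and j = 1 maximize at θ₀
  have hmax0 : ∀ j' : Fin n, LL θ₀ (ξ ^ ((⟨0, hnpos⟩ : Fin n) : ℕ)) ≥ LL θ₀ (ξ ^ (j' : ℕ)) := by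
    intro j'
    rw [LL_cos n hnpos, LL_cos n hnpos, hθ₀]
    have h0 : Real.cos (2 * Real.pi * (((⟨0, hnpos⟩ : Fin n) : ℕ) : ℝ) / n - Real.pi / n)
        = Real.cos (Real.pi / n) := by
      simp only [Nat.cast_zero, mul_zero, zero_div, zero_sub, Real.cos_neg]
    rw [h0]
    exact cos_max_aux n hn (j' : ℕ) j'.isLt
  have heq01 : LL θ₀ (ξ ^ ((⟨0, hnpos⟩ : Fin n) : ℕ)) = LL θ₀ (ξ ^ ((⟨1, by omega⟩ : Fin n) : ℕ)) := by
    rw [LL_cos n hnpos, LL_cos n hnpos, hθ₀]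
    norm_num
    rw [show (2 * Real.pi / (n:ℝ) - Real.pi / n) = Real.pi/n by ring]
  -- assemble the contradiction
  obtain ⟨w₀, hw₀⟩ := hFne (θ₀ - α)
  set j0 : Fin n := ⟨0, hnpos⟩ with hj0
  set j1 : Fin n := ⟨1, by omega⟩ with hj1
  have hmax1 : ∀ j' : Fin n, LL θ₀ (ξ ^ (j' : ℕ)) ≤ LL θ₀ (ξ ^ (j1 : ℕ)) := by
    intro j'
    exact (hmax0 j').trans_eq heq01
  have ha : F θ₀ (c * w₀ + ξ ^ (j0 : ℕ)) := push θ₀ w₀ j0 hw₀ (fun j' => hmax0 j')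
  have hb : F θ₀ (c * w₀ + ξ ^ (j1 : ℕ)) := push θ₀ w₀ j1 hw₀ hmax1
  set zm : ℂ := (1/2 : ℝ) • (c * w₀ + ξ ^ (j0 : ℕ)) + (1/2 : ℝ) • (c * w₀ + ξ ^ (j1 : ℕ)) with hzm
  have hzmΛ : zm ∈ Λ := hconv ha.1 hb.1 (by norm_num) (by norm_num) (by norm_num)
  have hzmF : F θ₀ zm := by
    refine ⟨hzmΛ, fun u hu => ?_⟩
    rw [hzm, LL_add, LL_smul, LL_smul]
    have h1 := ha.2 u hu
    have h2 := hb.2 u hu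
    linarith
  obtain ⟨j, w, hwF, hzw, -⟩ := pull θ₀ zm hzmF
  have hww : w = w₀ := hsing w w₀ hwF hw₀
  subst hww
  rw [hzm] at hzw
  have hpow0 : (j0 : ℕ) = 0 := rfl
  have hpow1 : (j1 : ℕ) = 1 := rfl
  rw [hpow0, hpow1, pow_zero, pow_one] at hzw
  rw [Complex.real_smul, Complex.real_smul] at hzw
  have hmid : ξ ^ (j : ℕ) = (1 + ξ)/2 := by
    push_cast at hzw
    linear_combination -hzw
  -- absolute values
  have hxiexp : ξ = Complex.exp (((2*Real.pi/n : ℝ) : ℂ) * Complex.I) := by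
    rw [hξ, xi]
    congr 1
    push_cast
    ring
  have habsξ : ‖ξ‖ = 1 := by rw [hxiexp]; exact Complex.norm_exp_ofReal_mul_I _
  have habsj : ‖ξ ^ (j : ℕ)‖ = 1 := by rw [norm_pow, habsξ, one_pow]
  have habs2 : ‖1 + ξ‖ = 2 := by
    have := congrArg (norm : ℂ → ℝ) hmid
    rw [habsj, norm_div] at this
    have h2 : ‖(2 : ℂ)‖ = 2 := by norm_num
    rw [h2] at this
    linarith [this]
  have hre : ξ.re = Real.cos (2*Real.pi/n) := by
    rw [hxiexp]; exact Complex.exp_ofReal_mul_I_re _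
  have him : ξ.im = Real.sin (2*Real.pi/n) := by
    rw [hxiexp]; exact Complex.exp_ofReal_mul_I_im _
  have hnsq : Complex.normSq (1 + ξ) = 4 := by
    rw [← Complex.sq_norm, habs2]
    norm_num
  have hcoslt : Real.cos (2*Real.pi/n) < 1 := by
    have hπ := Real.pi_pos
    have hn' : (0:ℝ) < n := by exact_mod_cast hnpos
    have hn2 : (2:ℝ) ≤ n := by exact_mod_cast hn
    have h1 : 2*Real.pi/n ≤ Real.pi := by
      rw [div_le_iff₀ hn']
      nlinarith
    have h2 : (0:ℝ) < 2*Real.pi/n := by positivity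
    calc Real.cos (2*Real.pi/n) < Real.cos 0 :=
          Real.cos_lt_cos_of_nonneg_of_le_pi le_rfl h1 h2
      _ = 1 := Real.cos_zero
  rw [Complex.normSq_apply, Complex.add_re, Complex.add_im, Complex.one_re, Complex.one_im,
    hre, him] at hnsq
  nlinarith [Real.sin_sq_add_cos_sq (2*Real.pi/n), hcoslt]
end

section
/- Suppose c = r e^{2πi p/q} with p/q in lowest terms and gcd(n,q) = 1, 0 < r < 1. For θ not in the finite set Θ = {ℓ(p/q) + m/n + 1/(2n) mod 1 : 0 ≤ ℓ < q, 0 ≤ m < n}, there is exactly one point of Λ_{n,c} maximizing v_θ. -/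
lemma v_aff (n : ℕ) (hn : 0 < n) (a : ℝ) (r : ℝ) (c : ℂ)
    (hc : c = r * Complex.exp (2 * Real.pi * Complex.I * a)) (φ : ℝ) (z : ℂ) (j : ℕ) :
    v φ (c * z + xi n ^ j) = r * v (φ - a) z
      + Real.cos (2 * Real.pi * ((j : ℝ) / n - φ)) := by
  have hn' : (n : ℂ) ≠ 0 := by exact_mod_cast hn.ne'
  unfold v xi
  rw [hc, ← Complex.exp_nat_mul]
  rw [add_mul, Complex.add_re]
  congr 1
  · have he : Complex.exp (2 * Real.pi * Complex.I * a) *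
        Complex.exp (-(2 * Real.pi * Complex.I) * φ)
        = Complex.exp (-(2 * Real.pi * Complex.I) * ((φ - a : ℝ) : ℂ)) := by
      rw [← Complex.exp_add]
      push_cast
      ring_nf
    have : (r : ℂ) * Complex.exp (2 * Real.pi * Complex.I * a) * z *
        Complex.exp (-(2 * Real.pi * Complex.I) * φ)
        = (r : ℂ) * (z * Complex.exp (-(2 * Real.pi * Complex.I) * ((φ - a : ℝ) : ℂ))) := by
      rw [← he]; ring
    rw [this, Complex.re_ofReal_mul]
  · have harg : (j : ℂ) * (2 * Real.pi * Complex.I / n) + (-(2 * Real.pi * Complex.I) * φ)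
        = ((2 * Real.pi * ((j : ℝ) / n - φ) : ℝ) : ℂ) * Complex.I := by
      push_cast
      field_simp
      ring
    rw [← Complex.exp_add, harg, Complex.exp_ofReal_mul_I_re]

lemma argmax_uniq (n : ℕ) (hn : 2 ≤ n) (φ : ℝ)
    (hφ : ∀ m : ℕ, m < n → ¬ ∃ z : ℤ, φ - ((m : ℝ) / n + 1 / (2 * n)) = z)
    (j j' : Fin n)
    (hj : ∀ i : Fin n, Real.cos (2 * Real.pi * ((i : ℝ) / n - φ))
      ≤ Real.cos (2 * Real.pi * ((j : ℝ) / n - φ)))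
    (hj' : ∀ i : Fin n, Real.cos (2 * Real.pi * ((i : ℝ) / n - φ))
      ≤ Real.cos (2 * Real.pi * ((j' : ℝ) / n - φ))) : j = j' := by
  have hn0 : (0:ℝ) < n := by positivity
  have hnne : (n:ℝ) ≠ 0 := hn0.ne'
  have hnz : (0:ℤ) < (n:ℤ) := by exact_mod_cast (by omega : 0 < n)
  have hπ : Real.pi ≠ 0 := Real.pi_ne_zero
  have hπ' : 0 < Real.pi := Real.pi_pos
  have hcos : Real.cos (2 * Real.pi * ((j : ℝ) / n - φ))
      = Real.cos (2 * Real.pi * ((j' : ℝ) / n - φ)) := le_antisymm (hj' j) (hj j')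
  rw [Real.cos_eq_cos_iff] at hcos
  obtain ⟨k, hk | hk⟩ := hcos
  · -- j' = j + k n
    have hjj : (j' : ℝ) = (k : ℝ) * n + j := by
      field_simp at hk
      nlinarith [hk]
    have hz : ((j' : ℕ) : ℤ) = k * n + (j : ℕ) := by exact_mod_cast hjj
    have h1 : ((j : ℕ) : ℤ) < n := by exact_mod_cast j.2
    have h2 : ((j' : ℕ) : ℤ) < n := by exact_mod_cast j'.2
    have h3 : (0:ℤ) ≤ ((j : ℕ) : ℤ) := by positivity
    have h4 : (0:ℤ) ≤ ((j' : ℕ) : ℤ) := by positivity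
    have hk0 : k = 0 := by
      by_contra h
      rcases lt_or_gt_of_ne h with h | h
      · nlinarith
      · nlinarith
    rw [hk0] at hz
    simp at hz
    exact Fin.ext (by omega)
  · -- 2 n φ = j + j' - k n
    have hs : 2 * (n : ℝ) * φ = (j : ℝ) + (j' : ℝ) - (k : ℝ) * n := by
      field_simp at hk
      nlinarith [hk]
    set s : ℤ := (j : ℤ) + (j' : ℤ) - k * n with hs_def
    have hφs : φ = (s : ℝ) / (2 * n) := by
      have hcast : (s : ℝ) = (j : ℝ) + (j' : ℝ) - (k : ℝ) * n := by push_cast [hs_def]; ring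
      rw [hcast]; field_simp; linarith [hs]
    have hmemgen : ∀ t : ℤ, 0 ≤ t % n ∧ t % n < (n : ℤ) := fun t =>
      ⟨Int.emod_nonneg t hnz.ne', Int.emod_lt_of_pos t hnz⟩
    rcases Int.even_or_odd s with ⟨t, ht⟩ | ⟨t, ht⟩
    · -- even: s = t + t, φ = t/n
      have hφt : φ = (t : ℝ) / n := by
        rw [hφs, ht]; push_cast; field_simp; ring
      obtain ⟨hm1, hm2⟩ := hmemgen t
      set j₀ : Fin n := ⟨(t % n).toNat, by omega⟩ with hj₀
      have hj₀t : ((j₀ : ℕ) : ℤ) = t % n := by simp [hj₀]; omega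
      have hdiv := Int.mul_ediv_add_emod t n
      have hone : Real.cos (2 * Real.pi * ((j₀ : ℝ) / n - φ)) = 1 := by
        have hsub : ((j₀ : ℕ) : ℝ) - (t : ℝ) = ((-(t / n) : ℤ) : ℝ) * n := by
          have : (t : ℝ) = ((n : ℤ) * (t / n) + t % n : ℤ) := by exact_mod_cast hdiv.symm
          rw [this, ← hj₀t]; push_cast; ring
        have harg : 2 * Real.pi * ((j₀ : ℝ) / n - φ)
            = ((-(t / n) : ℤ) : ℝ) * (2 * Real.pi) := by
          rw [hφt, div_sub_div_same, hsub]
          field_simp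
        rw [harg, Real.cos_int_mul_two_pi]
      have key : ∀ i : Fin n, (∀ i' : Fin n, Real.cos (2 * Real.pi * ((i' : ℝ) / n - φ))
          ≤ Real.cos (2 * Real.pi * ((i : ℝ) / n - φ))) → ((i : ℕ) : ℤ) = t % n := by
        intro i hi
        have h1 : Real.cos (2 * Real.pi * ((i : ℝ) / n - φ)) = 1 :=
          le_antisymm (Real.cos_le_one _) (hone ▸ hi j₀)
        rw [Real.cos_eq_one_iff] at h1
        obtain ⟨m, hm⟩ := h1
        have hire : (i : ℝ) = (m : ℝ) * n + t := by
          rw [hφt] at hm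
          field_simp at hm
          nlinarith [hm]
        have hiz : ((i : ℕ) : ℤ) = m * n + t := by exact_mod_cast hire
        have hself : ((i : ℕ) : ℤ) % n = ((i : ℕ) : ℤ) :=
          Int.emod_eq_of_lt (by positivity) (by exact_mod_cast i.2)
        calc ((i : ℕ) : ℤ) = ((i : ℕ) : ℤ) % n := hself.symm
          _ = (t + m * n) % n := by rw [hiz]; ring_nf
          _ = t % n := Int.add_mul_emod_self_right _ _ _
      have e1 := key j hj
      have e2 := key j' hj'
      exact Fin.ext (by omega)
    · -- odd: s = 2t+1
      exfalso
      obtain ⟨hm1, hm2⟩ := hmemgen t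
      set m : ℕ := (t % n).toNat with hm
      have hmlt : m < n := by omega
      refine hφ m hmlt ⟨t / n, ?_⟩
      have hmz : ((m : ℕ) : ℤ) = t % n := by omega
      have hdiv := Int.mul_ediv_add_emod t n
      have htr : (t : ℝ) = (n : ℝ) * ((t / n : ℤ) : ℝ) + (m : ℝ) := by
        have : (t : ℝ) = ((n : ℤ) * (t / n) + (m : ℕ) : ℤ) := by
          rw [hmz]; exact_mod_cast hdiv.symm
        rw [this]; push_cast; ring
      rw [hφs, ht]
      push_cast
      rw [htr]
      field_simp
      ring

def maxSet (φ : ℝ) (Λ : Set ℂ) : Set ℂ := {z | z ∈ Λ ∧ ∀ w ∈ Λ, v φ w ≤ v φ z}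

lemma v_continuous (φ : ℝ) : Continuous (v φ) :=
  Complex.continuous_re.comp (continuous_id.mul continuous_const)

lemma maxSet_nonempty (φ : ℝ) (Λ : Set ℂ) (hne : Λ.Nonempty) (hcomp : IsCompact Λ) :
    (maxSet φ Λ).Nonempty := by
  obtain ⟨z, hz, hmax⟩ := hcomp.exists_isMaxOn hne (v_continuous φ).continuousOn
  exact ⟨z, hz, fun w hw => hmax hw⟩

lemma key_step (n : ℕ) (hn : 2 ≤ n) (a r : ℝ) (hr0 : 0 < r) (c : ℂ)
    (hc : c = r * Complex.exp (2 * Real.pi * Complex.I * (a : ℂ)))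
    (Λ : Set ℂ) (hne : Λ.Nonempty) (hcomp : IsCompact Λ)
    (hinv : Λ = ⋃ j : Fin n, (fun z => c * z + xi n ^ (j : ℕ)) '' Λ)
    (φ : ℝ) (hφ : ∀ m : ℕ, m < n → ¬ ∃ z : ℤ, φ - ((m : ℝ) / n + 1 / (2 * n)) = z) :
    ∃ j : Fin n, ∀ z ∈ maxSet φ Λ,
      ∃ w, w ∈ maxSet (φ - a) Λ ∧ z = c * w + xi n ^ (j : ℕ) := by
  obtain ⟨w0, hw0Λ, hw0max⟩ := maxSet_nonempty (φ - a) Λ hne hcomp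
  have hsub : ∀ (i : Fin n) (w : ℂ), w ∈ Λ → c * w + xi n ^ (i : ℕ) ∈ Λ := by
    intro i w hw
    rw [hinv]
    exact Set.mem_iUnion.2 ⟨i, ⟨w, hw, rfl⟩⟩
  have hdec : ∀ z ∈ Λ, ∃ (i : Fin n) (w : ℂ), w ∈ Λ ∧ z = c * w + xi n ^ (i : ℕ) := by
    intro z hz
    rw [hinv] at hz
    obtain ⟨i, w, hw, hzw⟩ := Set.mem_iUnion.1 hz
    exact ⟨i, w, hw, hzw.symm⟩
  have claim : ∀ z ∈ maxSet φ Λ, ∃ (i : Fin n) (w : ℂ),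
      w ∈ maxSet (φ - a) Λ ∧ z = c * w + xi n ^ (i : ℕ) ∧
      ∀ i' : Fin n, Real.cos (2 * Real.pi * ((i' : ℝ) / n - φ))
        ≤ Real.cos (2 * Real.pi * ((i : ℝ) / n - φ)) := by
    rintro z ⟨hzΛ, hzmax⟩
    obtain ⟨i, w, hwΛ, hzw⟩ := hdec z hzΛ
    have hvz : v φ z = r * v (φ - a) w + Real.cos (2 * Real.pi * ((i : ℝ) / n - φ)) := by
      rw [hzw]; exact v_aff n (by omega) a r c hc φ w i
    have hM : ∀ i' : Fin n,
        r * v (φ - a) w0 + Real.cos (2 * Real.pi * (((i' : ℕ) : ℝ) / n - φ)) ≤ v φ z := by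
      intro i'
      rw [← v_aff n (by omega) a r c hc φ w0 (i' : ℕ)]
      exact hzmax _ (hsub i' w0 hw0Λ)
    have hwM : v (φ - a) w ≤ v (φ - a) w0 := hw0max w hwΛ
    have hMw : v (φ - a) w0 ≤ v (φ - a) w := by
      have h1 := hM i
      rw [hvz] at h1
      nlinarith [h1]
    refine ⟨i, w, ⟨hwΛ, fun u hu => (hw0max u hu).trans hMw⟩, hzw, ?_⟩
    intro i'
    have h1 := hM i'
    rw [hvz] at h1
    nlinarith [h1, hwM, hMw]
  obtain ⟨z0, hz0⟩ := maxSet_nonempty φ Λ hne hcomp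
  obtain ⟨j, w1, hw1, hz0w, hjmax⟩ := claim z0 hz0
  refine ⟨j, fun z hz => ?_⟩
  obtain ⟨i, w, hw, hzw, himax⟩ := claim z hz
  have hij : i = j := argmax_uniq n hn φ hφ i j himax hjmax
  exact ⟨w, hw, by rw [← hij]; exact hzw⟩

theorem unique_extreme_off_Theta (n : ℕ) (hn : 2 ≤ n) (p : ℤ) (q : ℕ) (hq : 0 < q)
    (hpq : Int.gcd p q = 1) (hnq : Nat.gcd n q = 1) (r : ℝ) (hr0 : 0 < r) (hr1 : r < 1)
    (c : ℂ) (hc : c = r * Complex.exp (2 * Real.pi * Complex.I * ((p : ℝ) / q)))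
    (Λ : Set ℂ) (hne : Λ.Nonempty) (hcomp : IsCompact Λ)
    (hinv : Λ = ⋃ j : Fin n, (fun z => c * z + xi n ^ (j : ℕ)) '' Λ)
    (θ : ℝ)
    (hθ : ∀ ℓ m : ℕ, ℓ < q → m < n →
      ((θ : ℝ) : AddCircle (1 : ℝ)) ≠
        (((ℓ : ℝ) * ((p : ℝ) / q) + (m : ℝ) / n + 1 / (2 * n) : ℝ) : AddCircle (1 : ℝ))) :
    ∃! z : ℂ, z ∈ Λ ∧ ∀ w ∈ Λ, v θ w ≤ v θ z := by
  set a : ℝ := (p : ℝ) / q with ha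
  have hq0 : (q : ℝ) ≠ 0 := by positivity
  -- the exceptional-angle hypothesis transferred to every shifted angle
  have hθk : ∀ k m : ℕ, m < n →
      ¬ ∃ z : ℤ, (θ - k * a) - ((m : ℝ) / n + 1 / (2 * n)) = z := by
    rintro k m hm ⟨z, hz⟩
    set ℓ : ℕ := k % q with hℓ
    set d : ℕ := k / q with hd
    have hkd : k = q * d + ℓ := (Nat.div_add_mod k q).symm
    refine hθ ℓ m (Nat.mod_lt _ hq) hm ?_
    have hdiff : θ - ((ℓ : ℝ) * a + (m : ℝ) / n + 1 / (2 * n)) = ((z + d * p : ℤ) : ℝ) := by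
      have hka : (k : ℝ) * a = (d : ℝ) * p + (ℓ : ℝ) * a := by
        rw [ha]
        have : (k : ℝ) = q * d + ℓ := by exact_mod_cast congrArg (Nat.cast : ℕ → ℝ) hkd
        rw [this]
        field_simp
      push_cast
      push_cast at hz
      linarith [hz, hka]
    have hmem : θ - ((ℓ : ℝ) * a + (m : ℝ) / n + 1 / (2 * n))
        ∈ AddSubgroup.zmultiples (1 : ℝ) := by
      rw [hdiff]
      exact ⟨z + d * p, by simp⟩
    exact (QuotientAddGroup.eq_iff_sub_mem.2 hmem : _)
  -- cast form of hc
  have hc' : c = r * Complex.exp (2 * Real.pi * Complex.I * ((a : ℝ) : ℂ)) := by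
    rw [hc, ha]; norm_cast
  -- |c| = r
  have habs : ‖c‖ = r := by
    rw [hc']
    have harg : (2 * (Real.pi : ℂ) * Complex.I * ((a : ℝ) : ℂ))
        = ((2 * Real.pi * a : ℝ) : ℂ) * Complex.I := by push_cast; ring
    rw [norm_mul, Complex.norm_real, Real.norm_eq_abs, abs_of_pos hr0, harg,
      Complex.norm_exp_ofReal_mul_I, mul_one]
  -- bound on Λ
  obtain ⟨R, hR⟩ := (Metric.isBounded_iff_subset_closedBall (0 : ℂ)).1 hcomp.isBounded
  have hRb : ∀ z ∈ Λ, ‖z‖ ≤ R := by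
    intro z hz
    have := hR hz
    rwa [Metric.mem_closedBall, Complex.dist_eq, sub_zero] at this
  -- the key step at every level
  have hstep : ∀ k : ℕ, ∃ j : Fin n, ∀ z ∈ maxSet (θ - k * a) Λ,
      ∃ w, w ∈ maxSet (θ - (k + 1 : ℕ) * a) Λ ∧ z = c * w + xi n ^ (j : ℕ) := by
    intro k
    have hshift : θ - k * a - a = θ - (k + 1 : ℕ) * a := by push_cast; ring
    have := key_step n hn a r hr0 c hc' Λ hne hcomp hinv (θ - k * a) (hθk k)
    rwa [hshift] at this
  -- contraction
  have hcontr : ∀ k : ℕ, ∀ z ∈ maxSet (θ - (0 : ℕ) * a) Λ, ∀ z' ∈ maxSet (θ - (0 : ℕ) * a) Λ,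
      ∃ u u', u ∈ maxSet (θ - k * a) Λ ∧ u' ∈ maxSet (θ - k * a) Λ ∧
        z - z' = c ^ k * (u - u') := by
    intro k
    induction k with
    | zero => exact fun z hz z' hz' => ⟨z, z', hz, hz', by simp⟩
    | succ k ih =>
      intro z hz z' hz'
      obtain ⟨u, u', hu, hu', huv⟩ := ih z hz z' hz'
      obtain ⟨j, hj⟩ := hstep k
      obtain ⟨w, hw, hwu⟩ := hj u hu
      obtain ⟨w', hw', hwu'⟩ := hj u' hu'
      refine ⟨w, w', hw, hw', ?_⟩
      rw [huv, hwu, hwu']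
      ring
  -- uniqueness of the maximizer at level 0
  have huniq : ∀ z ∈ maxSet (θ - (0 : ℕ) * a) Λ, ∀ z' ∈ maxSet (θ - (0 : ℕ) * a) Λ, z = z' := by
    intro z hz z' hz'
    have hbound : ∀ k : ℕ, ‖z - z'‖ ≤ r ^ k * (R + R) := by
      intro k
      obtain ⟨u, u', hu, hu', huv⟩ := hcontr k z hz z' hz'
      rw [huv, norm_mul, norm_pow, habs]
      have h1 : ‖u - u'‖ ≤ R + R := by
        calc ‖u - u'‖ ≤ ‖u‖ + ‖u'‖ :=
              norm_sub_le u u'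
          _ ≤ R + R := add_le_add (hRb u hu.1) (hRb u' hu'.1)
      exact mul_le_mul_of_nonneg_left h1 (pow_nonneg hr0.le k)
    have hlim : Filter.Tendsto (fun k : ℕ => r ^ k * (R + R)) Filter.atTop (nhds 0) := by
      have := (tendsto_pow_atTop_nhds_zero_of_lt_one hr0.le hr1).mul_const (R + R)
      simpa using this
    have hle : ‖z - z'‖ ≤ 0 :=
      ge_of_tendsto hlim (Filter.Eventually.of_forall hbound)
    have : ‖z - z'‖ = 0 := le_antisymm hle (norm_nonneg _)
    rwa [norm_eq_zero, sub_eq_zero] at this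
  -- assemble
  have h0 : θ - (0 : ℕ) * a = θ := by simp
  obtain ⟨z0, hz0⟩ := maxSet_nonempty (θ - (0 : ℕ) * a) Λ hne hcomp
  refine ⟨z0, ?_, ?_⟩
  · rw [← h0]; exact hz0
  · intro y hy
    refine huniq y ?_ z0 hz0
    rw [h0]; exact hy
end

section
/- Suppose c = r e^{2πi p/q} with p/q in lowest terms, 0 < r < 1, and let b satisfy bn = lcm(n,q). If Λ_{n,c} is convex, then r ≥ 2^{-1/b}. -/
open Real in
lemma interval_cover {x y a1 b1 a2 b2 : ℝ} (h1 : a1 ≤ b1) (h2 : a2 ≤ b2)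
    (h : Set.Icc x y ⊆ Set.Icc a1 b1 ∪ Set.Icc a2 b2) :
    y - x ≤ (b1 - a1) + (b2 - a2) := by
  rcases le_or_gt x y with hxy | hxy
  · have hm := (MeasureTheory.measure_mono (μ := MeasureTheory.volume) h).trans
      (MeasureTheory.measure_union_le _ _)
    rw [Real.volume_Icc, Real.volume_Icc, Real.volume_Icc,
      ← ENNReal.ofReal_add (by linarith) (by linarith)] at hm
    exact (ENNReal.ofReal_le_ofReal_iff (by linarith)).1 hm
  · linarith

open Real in
lemma cos_cases {x y : ℝ} (h : Real.cos x = Real.cos y) :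
    (∃ k : ℤ, x - y = k * (2 * π)) ∨ (∃ k : ℤ, x + y = k * (2 * π)) := by
  have h0 : Real.cos x - Real.cos y = 0 := by linarith
  rw [Real.cos_sub_cos] at h0
  rcases mul_eq_zero.1 h0 with h' | h'
  · rcases mul_eq_zero.1 h' with h'' | h''
    · norm_num at h''
    · right
      obtain ⟨k, hk⟩ := Real.sin_eq_zero_iff.1 h''
      exact ⟨k, by linarith⟩
  · left
    obtain ⟨k, hk⟩ := Real.sin_eq_zero_iff.1 h'
    exact ⟨k, by linarith⟩

open Real in
lemma sin_of_cos_eq {x y : ℝ} (h : Real.cos x = Real.cos y) :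
    Real.sin y = Real.sin x ∨ Real.sin y = -Real.sin x := by
  rcases cos_cases h with ⟨k, hk⟩ | ⟨k, hk⟩
  · left
    have hy : y = x - k * (2 * π) := by linarith
    rw [hy, Real.sin_sub]
    have c1 : Real.cos ((k : ℝ) * (2 * π)) = 1 := Real.cos_int_mul_two_pi k
    have s1 : Real.sin ((k : ℝ) * (2 * π)) = 0 := by
      have := Real.sin_int_mul_pi (2 * k)
      push_cast at this ⊢
      rw [show (k:ℝ) * (2*π) = 2*(k:ℝ)*π by ring]
      exact this
    rw [c1, s1]; ring
  · right
    have hy : y = k * (2 * π) - x := by linarith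
    rw [hy, Real.sin_sub]
    have c1 : Real.cos ((k : ℝ) * (2 * π)) = 1 := Real.cos_int_mul_two_pi k
    have s1 : Real.sin ((k : ℝ) * (2 * π)) = 0 := by
      have := Real.sin_int_mul_pi (2 * k)
      push_cast at this ⊢
      rw [show (k:ℝ) * (2*π) = 2*(k:ℝ)*π by ring]
      exact this
    rw [c1, s1]; ring

lemma nt1 {n q b : ℕ} {p : ℤ} (hn : 0 < n) (hpq : Int.gcd p q = 1)
    (hb : b * n = Nat.lcm n q) {i : ℕ} (hdvd : (q : ℤ) ∣ (i : ℤ) * p * n) : b ∣ i := by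
  have hcop : IsCoprime (q : ℤ) p := by
    rw [Int.isCoprime_iff_gcd_eq_one, Int.gcd_comm]
    exact hpq
  have h1 : (q : ℤ) ∣ (i : ℤ) * n := by
    have : (q : ℤ) ∣ p * ((i : ℤ) * n) := by
      have : (i : ℤ) * p * n = p * ((i:ℤ) * n) := by ring
      rwa [this] at hdvd
    exact hcop.dvd_of_dvd_mul_left this
  have h2 : q ∣ i * n := by exact_mod_cast h1
  have h3 : Nat.lcm n q ∣ i * n := Nat.lcm_dvd (dvd_mul_left n i) h2
  rw [← hb] at h3
  exact (Nat.mul_dvd_mul_iff_right hn).1 h3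

open Real in
lemma cos_le_cos_pi_div {n : ℕ} (hn : 2 ≤ n) {j : ℕ} (hj : j < n) :
    Real.cos (2 * π * j / n - π / n) ≤ Real.cos (π / n) := by
  have hn0 : (0:ℝ) < n := by positivity
  have hpi := Real.pi_pos
  have hpn : 0 < π / n := by positivity
  rcases Nat.eq_zero_or_pos j with rfl | hj1
  · simp only [Nat.cast_zero, mul_zero, zero_div, zero_sub, Real.cos_neg, le_refl]
  · set x : ℝ := 2 * π * j / n - π / n with hx
    have hj1' : (1:ℝ) ≤ j := by exact_mod_cast hj1
    have hjn : (j:ℝ) ≤ n - 1 := by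
      have : (j:ℝ) + 1 ≤ n := by exact_mod_cast hj
      linarith
    have hx1 : π / n ≤ x := by
      rw [hx]
      rw [div_sub_div_same, div_le_div_iff₀ hn0 hn0]
      nlinarith [mul_le_mul_of_nonneg_left hj1' (by positivity : (0:ℝ) ≤ 2*π*n)]
    have hx2 : x ≤ 2 * π - 3 * (π / n) := by
      rw [hx, div_sub_div_same, div_le_iff₀ hn0]
      have h3 : 3*(π/n)*n = 3*π := by field_simp
      nlinarith [mul_le_mul_of_nonneg_left hjn (by positivity : (0:ℝ) ≤ 2*π)]
    rcases le_or_gt x π with hxp | hxp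
    · exact Real.cos_le_cos_of_nonneg_of_le_pi hpn.le hxp hx1
    · have hcx : Real.cos x = Real.cos (2*π - x) := by
        rw [show 2*π - x = -(x - 2*π) by ring, Real.cos_neg, Real.cos_sub_two_pi]
      rw [hcx]
      apply Real.cos_le_cos_of_nonneg_of_le_pi hpn.le (by linarith)
      linarith

set_option maxHeartbeats 2000000 in
open Real in
theorem convex_implies_modulus_bound (n : ℕ) (hn : 2 ≤ n) (p : ℤ) (q : ℕ) (hq : 0 < q)
    (hpq : Int.gcd p q = 1) (r : ℝ) (hr0 : 0 < r) (hr1 : r < 1)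
    (c : ℂ) (hc : c = r * Complex.exp (2 * Real.pi * Complex.I * ((p : ℝ) / q)))
    (b : ℕ) (hb : b * n = Nat.lcm n q)
    (Λ : Set ℂ) (hne : Λ.Nonempty) (hcomp : IsCompact Λ)
    (hinv : Λ = ⋃ j : Fin n, (fun z => c * z + xi n ^ (j : ℕ)) '' Λ)
    (hconv : Convex ℝ Λ) :
    (2 : ℝ) ^ (-(1 : ℝ) / b) ≤ r := by
  classical
  have hπ := Real.pi_pos
  have hn0 : 0 < n := by omega
  have hnR : (0:ℝ) < n := by exact_mod_cast hn0
  have hqR : (0:ℝ) < q := by exact_mod_cast hq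
  have hb1 : 0 < b := by
    rcases Nat.eq_zero_or_pos b with h | h
    · exfalso
      have hl : 0 < Nat.lcm n q := Nat.pos_of_ne_zero (Nat.lcm_ne_zero (by omega) (by omega))
      rw [h, zero_mul] at hb
      omega
    · exact h
  set α : ℝ := 2 * Real.pi * p / q with hαdef
  set θ : ℕ → ℝ := fun i => Real.pi / n - i * α with hθdef
  have hθsucc : ∀ i : ℕ, θ (i+1) = θ i - α := by
    intro i; simp only [hθdef]; push_cast; ring
  set u : ℕ → ℂ := fun i => Complex.exp ((-θ i : ℝ) * Complex.I) with hudef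
  set S : ℕ → ℂ → ℝ := fun i z => (z * u i).re with hSdef
  set T : ℕ → ℂ → ℝ := fun i z => (z * u i).im with hTdef
  have hc' : c = (r : ℂ) * Complex.exp ((α : ℝ) * Complex.I) := by
    have hexpeq : 2 * (Real.pi : ℂ) * Complex.I * (((p : ℝ) : ℂ) / ((q : ℕ) : ℂ))
        = ((α : ℝ) : ℂ) * Complex.I := by rw [hαdef]; push_cast; ring
    rw [hc, hexpeq]
  have hxi : ∀ j : ℕ, xi n ^ j = Complex.exp ((2*Real.pi*j/n : ℝ) * Complex.I) := by
    intro j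
    rw [xi, ← Complex.exp_nat_mul]
    congr 1
    push_cast
    ring
  have hkey : ∀ (i : ℕ) (w : ℂ) (j : ℕ),
      (c * w + xi n ^ j) * u i
        = (r:ℂ) * (w * u (i+1)) + Complex.exp ((2*Real.pi*j/n - θ i : ℝ) * Complex.I) := by
    intro i w j
    have e1 : Complex.exp ((α:ℝ)*Complex.I) * Complex.exp ((-θ i : ℝ)*Complex.I)
        = Complex.exp ((-θ (i+1) : ℝ) * Complex.I) := by
      rw [← Complex.exp_add]; congr 1; rw [hθsucc]; push_cast; ring
    have e2 : Complex.exp ((2*Real.pi*j/n : ℝ)*Complex.I) * Complex.exp ((-θ i : ℝ)*Complex.I)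
        = Complex.exp ((2*Real.pi*j/n - θ i : ℝ) * Complex.I) := by
      rw [← Complex.exp_add]; congr 1; push_cast; ring
    calc (c * w + xi n ^ j) * u i
        = (r:ℂ) * (w * (Complex.exp ((α:ℝ)*Complex.I) * Complex.exp ((-θ i : ℝ)*Complex.I)))
          + Complex.exp ((2*Real.pi*j/n : ℝ)*Complex.I) * Complex.exp ((-θ i : ℝ)*Complex.I) := by
          simp only [hudef]; rw [hc', hxi]; ring
      _ = (r:ℂ) * (w * u (i+1)) + Complex.exp ((2*Real.pi*j/n - θ i : ℝ) * Complex.I) := by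
          rw [e1, e2]
  have hSkey : ∀ (i : ℕ) (w : ℂ) (j : ℕ),
      S i (c * w + xi n ^ j) = r * S (i+1) w + Real.cos (2*Real.pi*j/n - θ i) := by
    intro i w j
    simp only [hSdef]
    rw [hkey, Complex.add_re, Complex.re_ofReal_mul, Complex.exp_ofReal_mul_I_re]
  have hTkey : ∀ (i : ℕ) (w : ℂ) (j : ℕ),
      T i (c * w + xi n ^ j) = r * T (i+1) w + Real.sin (2*Real.pi*j/n - θ i) := by
    intro i w j
    simp only [hTdef]
    rw [hkey, Complex.add_im, Complex.im_ofReal_mul, Complex.exp_ofReal_mul_I_im]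
  have hmem1 : ∀ z ∈ Λ, ∃ w ∈ Λ, ∃ j < n, z = c * w + xi n ^ j := by
    intro z hz
    rw [hinv] at hz
    simp only [Set.mem_iUnion, Set.mem_image] at hz
    obtain ⟨j, w, hw, hzw⟩ := hz
    exact ⟨w, hw, j, j.isLt, hzw.symm⟩
  have hmem2 : ∀ w ∈ Λ, ∀ j : ℕ, j < n → c * w + xi n ^ j ∈ Λ := by
    intro w hw j hj
    rw [hinv]
    simp only [Set.mem_iUnion, Set.mem_image]
    exact ⟨⟨j, hj⟩, w, hw, rfl⟩
  have hScont : ∀ i, Continuous (S i) :=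
    fun i => Complex.continuous_re.comp (continuous_id.mul continuous_const)
  have hTcont : ∀ i, Continuous (T i) :=
    fun i => Complex.continuous_im.comp (continuous_id.mul continuous_const)
  have hMex : ∀ i : ℕ, ∃ z ∈ Λ, ∀ w ∈ Λ, S i w ≤ S i z := by
    intro i
    obtain ⟨z, hz, hmax⟩ := hcomp.exists_isMaxOn hne ((hScont i).continuousOn)
    exact ⟨z, hz, fun w hw => hmax hw⟩
  choose zM hzM hzMmax using hMex
  set M : ℕ → ℝ := fun i => S i (zM i) with hMdef
  set Face : ℕ → Set ℂ := fun i => {z | z ∈ Λ ∧ S i z = M i} with hFdef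
  have hFaceΛ : ∀ i, Face i ⊆ Λ := fun i z hz => hz.1
  have hFaceNe : ∀ i, (Face i).Nonempty := fun i => ⟨zM i, hzM i, rfl⟩
  have hFaceComp : ∀ i, IsCompact (Face i) := by
    intro i
    apply IsCompact.of_isClosed_subset hcomp ?_ (hFaceΛ i)
    have : Face i = Λ ∩ {z | S i z = M i} := by
      ext z; simp [hFdef, Set.mem_inter_iff]
    rw [this]
    exact hcomp.isClosed.inter (isClosed_eq (hScont i) continuous_const)
  have hminex : ∀ i, ∃ z ∈ Face i, ∀ w ∈ Face i, T i z ≤ T i w := by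
    intro i
    obtain ⟨z, hz, hmin⟩ := (hFaceComp i).exists_isMinOn (hFaceNe i) ((hTcont i).continuousOn)
    exact ⟨z, hz, fun w hw => hmin hw⟩
  have hmaxex : ∀ i, ∃ z ∈ Face i, ∀ w ∈ Face i, T i w ≤ T i z := by
    intro i
    obtain ⟨z, hz, hmax⟩ := (hFaceComp i).exists_isMaxOn (hFaceNe i) ((hTcont i).continuousOn)
    exact ⟨z, hz, fun w hw => hmax hw⟩
  choose plo hplo hploMin using hminex
  choose phi hphi hphiMax using hmaxex
  set L : ℕ → ℝ := fun i => T i (phi i) - T i (plo i) with hLdef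
  have hLnonneg : ∀ i, 0 ≤ L i := fun i => sub_nonneg.2 (hploMin i (phi i) (hphi i))
  have hjmex : ∀ i : ℕ, ∃ j ∈ Finset.range n, ∀ j' ∈ Finset.range n,
      Real.cos (2*Real.pi*j'/n - θ i) ≤ Real.cos (2*Real.pi*j/n - θ i) :=
    fun i => Finset.exists_max_image (Finset.range n)
      (fun j => Real.cos (2*Real.pi*j/n - θ i)) ⟨0, Finset.mem_range.2 hn0⟩
  choose jm hjmlt hjmmax using hjmex
  have hjmlt' : ∀ i, jm i < n := fun i => Finset.mem_range.1 (hjmlt i)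
  set G : ℕ → ℝ := fun i => Real.cos (2*Real.pi*(jm i)/n - θ i) with hGdef
  have hMrec : ∀ i, M i = r * M (i+1) + G i := by
    intro i
    apply le_antisymm
    · obtain ⟨w, hw, j, hj, hzeq⟩ := hmem1 (zM i) (hzM i)
      have h1 : M i = r * S (i+1) w + Real.cos (2*Real.pi*j/n - θ i) := by
        show S i (zM i) = _
        rw [hzeq, hSkey]
      rw [h1]
      exact add_le_add (mul_le_mul_of_nonneg_left (hzMmax (i+1) w hw) hr0.le)
        (hjmmax i j (Finset.mem_range.2 hj))
    · have hmem := hmem2 (zM (i+1)) (hzM (i+1)) (jm i) (hjmlt' i)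
      have h2 := hzMmax i _ hmem
      rw [hSkey] at h2
      exact h2
  have hFdec : ∀ i, ∀ z ∈ Face i, ∃ w ∈ Face (i+1), ∃ j < n,
      z = c * w + xi n ^ j ∧ Real.cos (2*Real.pi*j/n - θ i) = G i := by
    intro i z hz
    obtain ⟨w, hw, j, hj, hzeq⟩ := hmem1 z hz.1
    have hSz : S i z = M i := hz.2
    have h1 : S (i+1) w ≤ M (i+1) := hzMmax (i+1) w hw
    have h2 : Real.cos (2*Real.pi*j/n - θ i) ≤ G i := hjmmax i j (Finset.mem_range.2 hj)
    have heq : r * S (i+1) w + Real.cos (2*Real.pi*j/n - θ i) = r * M (i+1) + G i := by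
      rw [← hSkey i w j, ← hzeq, hSz, hMrec]
    have hw' : S (i+1) w = M (i+1) := by nlinarith
    have hcj : Real.cos (2*Real.pi*j/n - θ i) = G i := by
      rw [hw'] at heq; linarith
    exact ⟨w, ⟨hw, hw'⟩, j, hj, hzeq, hcj⟩
  have hSlin : ∀ (i : ℕ) (a b' : ℝ) (z w : ℂ),
      S i (a • z + b' • w) = a * S i z + b' * S i w := by
    intro i a b' z w
    show ((a • z + b' • w) * u i).re = a * (z * u i).re + b' * (w * u i).re
    rw [show (a • z + b' • w) * u i = (a:ℂ) * (z * u i) + (b':ℂ) * (w * u i) from by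
      simp [Complex.real_smul]; ring]
    rw [Complex.add_re, Complex.re_ofReal_mul, Complex.re_ofReal_mul]
  have hTlin : ∀ (i : ℕ) (a b' : ℝ) (z w : ℂ),
      T i (a • z + b' • w) = a * T i z + b' * T i w := by
    intro i a b' z w
    show ((a • z + b' • w) * u i).im = a * (z * u i).im + b' * (w * u i).im
    rw [show (a • z + b' • w) * u i = (a:ℂ) * (z * u i) + (b':ℂ) * (w * u i) from by
      simp [Complex.real_smul]; ring]
    rw [Complex.add_im, Complex.im_ofReal_mul, Complex.im_ofReal_mul]
  -- general upper bound via two intervals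
  have hUB2 : ∀ i, L i ≤ 2 * (r * L (i+1)) := by
    intro i
    set s0 : ℝ := Real.sin (2*Real.pi*(jm i)/n - θ i) with hs0def
    set t1 : ℝ := T (i+1) (plo (i+1)) with ht1def
    set t2 : ℝ := T (i+1) (phi (i+1)) with ht2def
    have ht12 : t1 ≤ t2 := hploMin (i+1) (phi (i+1)) (hphi (i+1))
    have hrt : r * t1 ≤ r * t2 := mul_le_mul_of_nonneg_left ht12 hr0.le
    have hpt : ∀ z ∈ Face i,
        T i z ∈ Set.Icc (r*t1 + s0) (r*t2 + s0) ∪ Set.Icc (r*t1 - s0) (r*t2 - s0) := by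
      intro z hz
      obtain ⟨w, hwF, j, hj, hzeq, hcj⟩ := hFdec i z hz
      have hTz : T i z = r * T (i+1) w + Real.sin (2*Real.pi*j/n - θ i) := by
        rw [hzeq, hTkey]
      have hwlo : t1 ≤ T (i+1) w := hploMin (i+1) w hwF
      have hwhi : T (i+1) w ≤ t2 := hphiMax (i+1) w hwF
      have hr1' : r * t1 ≤ r * T (i+1) w := mul_le_mul_of_nonneg_left hwlo hr0.le
      have hr2' : r * T (i+1) w ≤ r * t2 := mul_le_mul_of_nonneg_left hwhi hr0.le
      rcases sin_of_cos_eq (hcj.symm : G i = Real.cos (2*Real.pi*j/n - θ i)) with hs | hs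
      · left
        constructor <;> rw [hTz, hs] <;> [linarith; linarith]
      · right
        constructor <;> rw [hTz, hs] <;> [linarith; linarith]
    have hcov : Set.Icc (T i (plo i)) (T i (phi i)) ⊆
        Set.Icc (r*t1 + s0) (r*t2 + s0) ∪ Set.Icc (r*t1 - s0) (r*t2 - s0) := by
      intro t ht
      set tlo := T i (plo i) with htlo
      set thi := T i (phi i) with hthi
      have hLieq : L i = thi - tlo := rfl
      rcases eq_or_lt_of_le (hLnonneg i) with hd | hd
      · have hd2 : tlo = thi := by rw [hLieq] at hd; linarith
        have : t = thi := le_antisymm ht.2 (hd2 ▸ ht.1)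
        rw [this]
        exact hpt (phi i) (hphi i)
      · have hdpos : 0 < thi - tlo := by rw [hLieq] at hd; linarith
        set a : ℝ := (thi - t)/(thi - tlo) with hadef
        set b' : ℝ := (t - tlo)/(thi - tlo) with hbdef
        have ha : 0 ≤ a := by
          apply div_nonneg _ hdpos.le; linarith [ht.2]
        have hb' : 0 ≤ b' := by
          apply div_nonneg _ hdpos.le; linarith [ht.1]
        have hab : a + b' = 1 := by
          rw [hadef, hbdef, ← add_div, div_eq_one_iff_eq (ne_of_gt hdpos)]; ring
        have hzΛ : a • plo i + b' • phi i ∈ Λ :=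
          hconv (hFaceΛ i (hplo i)) (hFaceΛ i (hphi i)) ha hb' hab
        have hzF : a • plo i + b' • phi i ∈ Face i := by
          refine ⟨hzΛ, ?_⟩
          rw [hSlin, (hplo i).2, (hphi i).2]
          rw [← add_mul, hab, one_mul]
        have hTt : T i (a • plo i + b' • phi i) = t := by
          rw [hTlin, hadef, hbdef]
          field_simp
          ring
        rw [← hTt]
        exact hpt _ hzF
    have hic := interval_cover (by linarith : r*t1 + s0 ≤ r*t2 + s0)
      (by linarith : r*t1 - s0 ≤ r*t2 - s0) hcov
    have hLi : L i = T i (phi i) - T i (plo i) := rfl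
    have hL1 : L (i+1) = t2 - t1 := rfl
    rw [hLi, hL1]
    linarith
  have hUB1 : ∀ i, ¬ (b ∣ i) → L i ≤ r * L (i+1) := by
    intro i hbi
    have hjmi := hjmlt' i
    have huniq : ∀ j, j < n → Real.cos (2*Real.pi*j/n - θ i) = G i → j = jm i := by
      intro j hjn hcj
      rcases cos_cases hcj with ⟨k, hk⟩ | ⟨k, hk⟩
      · -- difference case
        have hn' : (n:ℝ) ≠ 0 := ne_of_gt hnR
        have h1 : 2*Real.pi*((j:ℝ) - jm i) = k*(2*Real.pi)*n := by
          field_simp at hk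
          linear_combination hk
        have h2 : (2*Real.pi) * ((j:ℝ) - jm i) = (2*Real.pi) * ((k:ℝ)*n) := by
          linear_combination h1
        have h3 : (j:ℝ) - jm i = (k:ℝ)*n := mul_left_cancel₀ (by positivity) h2
        have h4 : (j:ℤ) - jm i = k*n := by exact_mod_cast h3
        have habs : |(j:ℤ) - jm i| < n := by rw [abs_lt]; omega
        rw [h4, abs_mul] at habs
        have hk0 : k = 0 := by
          by_contra hk0
          have h5 : (1:ℤ) ≤ |k| := Int.one_le_abs (by omega)
          rw [Int.abs_natCast] at habs
          nlinarith [habs, h5]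
        rw [hk0] at h4; omega
      · -- sum case
        have hn' : (n:ℝ) ≠ 0 := ne_of_gt hnR
        have hq' : (q:ℝ) ≠ 0 := ne_of_gt hqR
        simp only [hθdef, hαdef] at hk
        have h1 : ((q:ℝ)*j + q*(jm i) - q + 2*i*p*n) * (2*Real.pi*n)
            = ((k:ℝ)*n*q) * (2*Real.pi*n) := by
          field_simp at hk
          linear_combination Real.pi * n * hk
        have h2 := mul_right_cancel₀ (show (2*Real.pi*(n:ℝ)) ≠ 0 by positivity) h1
        have hZ : (q:ℤ)*j + q*(jm i) - q + 2*i*p*n = k*n*q := by exact_mod_cast h2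
        set s : ℤ := k*n + 1 - j - jm i with hsdef
        have hqs : 2*(i:ℤ)*p*n = q*s := by rw [hsdef]; linear_combination hZ
        rcases Int.even_or_odd s with ⟨m, hm⟩ | ⟨m, hm⟩
        · exfalso
          apply hbi
          apply nt1 hn0 hpq hb
          refine ⟨m, ?_⟩
          have h6 : 2*((i:ℤ)*p*n) = 2*((q:ℤ)*m) := by rw [hm] at hqs; linear_combination hqs
          · exact mul_left_cancel₀ two_ne_zero h6
        · -- s odd
          have hiα : (i:ℝ)*α = Real.pi*s/n := by
            rw [hαdef]
            have h : (2*(i:ℝ)*p*n) = (q:ℝ)*s := by exact_mod_cast hqs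
            field_simp
            linear_combination h
          have hθi : θ i = -(2*Real.pi*(m:ℝ)/n) := by
            have hθeq : θ i = Real.pi/n - i*α := by simp only [hθdef]
            rw [hθeq, hiα, hm]
            push_cast
            field_simp
            ring
          set j0 : ℕ := ((-m) % (n:ℤ)).toNat with hj0def
          have hmod1 : 0 ≤ (-m) % (n:ℤ) := Int.emod_nonneg _ (by exact_mod_cast hn0.ne')
          have hmod2 : (-m) % (n:ℤ) < n := Int.emod_lt_of_pos _ (by exact_mod_cast hn0)
          have hj0lt : j0 < n := by omega
          have hj0v : (j0:ℤ) = (-m) % (n:ℤ) := Int.toNat_of_nonneg hmod1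
          have ht : (j0:ℤ) + m = n * (-((-m)/(n:ℤ))) := by
            rw [hj0v, Int.emod_def]; ring
          set t : ℤ := -((-m)/(n:ℤ)) with htdef
          have hangle : 2*Real.pi*(j0:ℝ)/n - (-(2*Real.pi*(m:ℝ)/n)) = (t:ℝ)*(2*Real.pi) := by
            have h : (j0:ℝ) + m = n*t := by exact_mod_cast ht
            field_simp
            linear_combination h
          have hcos1 : Real.cos (2*Real.pi*(j0:ℝ)/n - θ i) = 1 := by
            rw [hθi, hangle]
            exact Real.cos_int_mul_two_pi t
          have hG1 : G i = 1 := by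
            apply le_antisymm (Real.cos_le_one _)
            calc (1:ℝ) = Real.cos (2*Real.pi*(j0:ℝ)/n - θ i) := hcos1.symm
              _ ≤ G i := hjmmax i j0 (Finset.mem_range.2 hj0lt)
          have hj' : Real.cos (2*Real.pi*j/n - θ i) = 1 := by
            calc Real.cos (2*Real.pi*j/n - θ i) = G i := hcj
              _ = 1 := hG1
          have hjm' : Real.cos (2*Real.pi*(jm i)/n - θ i) = 1 := hG1
          obtain ⟨t1, ht1⟩ := (Real.cos_eq_one_iff _).1 hj'
          obtain ⟨t2, ht2⟩ := (Real.cos_eq_one_iff _).1 hjm'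
          rw [hθi] at ht1 ht2
          have h1 : (2*Real.pi)*((j:ℝ) - jm i) = (2*Real.pi)*(((t1 - t2 : ℤ):ℝ)*n) := by
            field_simp at ht1 ht2
            push_cast
            linear_combination 2*Real.pi*(ht2 - ht1)
          have h3 : (j:ℝ) - jm i = ((t1 - t2 : ℤ):ℝ)*n := mul_left_cancel₀ (by positivity) h1
          have h4 : (j:ℤ) - jm i = (t1 - t2)*n := by exact_mod_cast h3
          have habs : |(j:ℤ) - jm i| < n := by rw [abs_lt]; omega
          rw [h4, abs_mul] at habs
          have hk0 : t1 - t2 = 0 := by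
            by_contra hk0
            have h5 : (1:ℤ) ≤ |t1 - t2| := Int.one_le_abs (by omega)
            rw [Int.abs_natCast] at habs
            nlinarith [habs, h5]
          rw [hk0] at h4; omega
    obtain ⟨w1, hw1F, j1, hj1, he1, hc1⟩ := hFdec i (phi i) (hphi i)
    obtain ⟨w2, hw2F, j2, hj2, he2, hc2⟩ := hFdec i (plo i) (hplo i)
    have hj1' := huniq j1 hj1 hc1
    have hj2' := huniq j2 hj2 hc2
    rw [hj1'] at he1
    rw [hj2'] at he2
    have hT1 : T i (phi i) = r * T (i+1) w1 + Real.sin (2*Real.pi*(jm i)/n - θ i) := by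
      rw [he1, hTkey]
    have hT2 : T i (plo i) = r * T (i+1) w2 + Real.sin (2*Real.pi*(jm i)/n - θ i) := by
      rw [he2, hTkey]
    have hb1' : T (i+1) w1 ≤ T (i+1) (phi (i+1)) := hphiMax (i+1) w1 hw1F
    have hb2' : T (i+1) (plo (i+1)) ≤ T (i+1) w2 := hploMin (i+1) w2 hw2F
    have hL1 : L (i+1) = T (i+1) (phi (i+1)) - T (i+1) (plo (i+1)) := rfl
    have hLi : L i = T i (phi i) - T i (plo i) := rfl
    rw [hLi, hL1, hT1, hT2]
    have := mul_le_mul_of_nonneg_left (sub_le_sub hb1' hb2') hr0.le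
    linarith
  -- lower bound at 0
  set ell : ℝ := 2 * Real.sin (Real.pi / n) with helldef
  have hellpos : 0 < ell := by
    have h1 : (0:ℝ) < Real.pi / n := by positivity
    have h2 : Real.pi / n < Real.pi := by
      have h2n : (2:ℝ) ≤ n := by exact_mod_cast hn
      rw [div_lt_iff₀ hnR]
      nlinarith [hπ, mul_pos hπ (show (0:ℝ) < n - 1 by linarith)]
    have := Real.sin_pos_of_pos_of_lt_pi h1 h2
    rw [helldef]; linarith
  have hθ0 : θ 0 = Real.pi / n := by simp [hθdef]
  have hG0 : G 0 = Real.cos (Real.pi / n) := by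
    apply le_antisymm
    · have h := cos_le_cos_pi_div hn (hjmlt' 0)
      show Real.cos (2*Real.pi*(jm 0)/n - θ 0) ≤ _
      rw [hθ0]
      exact h
    · have h := hjmmax 0 0 (Finset.mem_range.2 hn0)
      have h0 : Real.cos (2*Real.pi*((0:ℕ):ℝ)/n - θ 0) = Real.cos (Real.pi/n) := by
        rw [hθ0]
        push_cast
        rw [show 2*Real.pi*0/(n:ℝ) - Real.pi/n = -(Real.pi/n) by ring, Real.cos_neg]
      calc Real.cos (Real.pi/n) = Real.cos (2*Real.pi*((0:ℕ):ℝ)/n - θ 0) := h0.symm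
        _ ≤ G 0 := h
  have hL0 : ell ≤ L 0 := by
    have hwF : zM 1 ∈ Face 1 := ⟨hzM 1, rfl⟩
    have hcos0 : Real.cos (2*Real.pi*((0:ℕ):ℝ)/n - θ 0) = G 0 := by
      rw [hθ0, hG0]
      norm_num
    have hcos1 : Real.cos (2*Real.pi*((1:ℕ):ℝ)/n - θ 0) = G 0 := by
      rw [hθ0, hG0]
      congr 1
      push_cast
      ring
    have hx1 : c * zM 1 + xi n ^ (0:ℕ) ∈ Face 0 := by
      refine ⟨hmem2 (zM 1) (hzM 1) 0 hn0, ?_⟩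
      rw [hSkey]
      show r * S 1 (zM 1) + _ = M 0
      rw [hcos0, hMrec 0]
    have hx2 : c * zM 1 + xi n ^ (1:ℕ) ∈ Face 0 := by
      refine ⟨hmem2 (zM 1) (hzM 1) 1 (by omega), ?_⟩
      rw [hSkey]
      show r * S 1 (zM 1) + _ = M 0
      rw [hcos1, hMrec 0]
    have hT1 : T 0 (c * zM 1 + xi n ^ (0:ℕ))
        = r * T 1 (zM 1) + Real.sin (2*Real.pi*((0:ℕ):ℝ)/n - θ 0) := hTkey 0 (zM 1) 0
    have hT2 : T 0 (c * zM 1 + xi n ^ (1:ℕ))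
        = r * T 1 (zM 1) + Real.sin (2*Real.pi*((1:ℕ):ℝ)/n - θ 0) := hTkey 0 (zM 1) 1
    have hsin0 : Real.sin (2*Real.pi*((0:ℕ):ℝ)/n - θ 0) = -Real.sin (Real.pi/n) := by
      rw [hθ0]
      push_cast
      rw [show 2*Real.pi*0/(n:ℝ) - Real.pi/n = -(Real.pi/n) by ring, Real.sin_neg]
    have hsin1 : Real.sin (2*Real.pi*((1:ℕ):ℝ)/n - θ 0) = Real.sin (Real.pi/n) := by
      congr 1
      rw [hθ0]
      push_cast
      ring
    have hlo := hploMin 0 _ hx1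
    have hhi := hphiMax 0 _ hx2
    have hLi : L 0 = T 0 (phi 0) - T 0 (plo 0) := rfl
    rw [hLi, helldef]
    rw [hT1, hsin0] at hlo
    rw [hT2, hsin1] at hhi
    linarith
  -- uniform bound
  obtain ⟨R, hR⟩ : ∃ R : ℝ, ∀ z ∈ Λ, ‖z‖ ≤ R := by
    obtain ⟨R, hR⟩ := hcomp.isBounded.subset_closedBall 0
    refine ⟨R, fun z hz => ?_⟩
    have := hR hz
    rwa [Metric.mem_closedBall, Complex.dist_eq, sub_zero] at this
  have hR0 : 0 ≤ R := le_trans (norm_nonneg _) (hR _ hne.some_mem)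
  set D : ℝ := 2*R + 1 with hDdef
  have hDpos : 0 < D := by rw [hDdef]; linarith
  have hLD : ∀ i, L i ≤ D := by
    intro i
    have habs : ∀ z ∈ Λ, |T i z| ≤ R := by
      intro z hz
      have h1 : |T i z| ≤ ‖z * u i‖ := Complex.abs_im_le_norm _
      have h2 : ‖z * u i‖ = ‖z‖ := by
        rw [norm_mul]
        have : ‖u i‖ = 1 := by
          show ‖Complex.exp ((-θ i : ℝ) * Complex.I)‖ = 1
          exact Complex.norm_exp_ofReal_mul_I _
        rw [this, mul_one]
      rw [h2] at h1
      exact h1.trans (hR z hz)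
    have h1 := abs_le.1 (habs (phi i) (hFaceΛ i (hphi i)))
    have h2 := abs_le.1 (habs (plo i) (hFaceΛ i (hplo i)))
    have hLi : L i = T i (phi i) - T i (plo i) := rfl
    rw [hLi, hDdef]
    linarith [h1.2, h2.1]
  -- geometric chain
  have h2rb0 : (0:ℝ) ≤ 2*r^b := by positivity
  have hchain : ∀ k : ℕ, L 0 ≤ (2*r^b)^k * L (k*b) := by
    intro k
    induction k with
    | zero => simp
    | succ k ih =>
      have inner : ∀ m : ℕ, m ≤ b - 1 → L (k*b + 1) ≤ r^m * L (k*b + 1 + m) := by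
        intro m hm
        induction m with
        | zero => simp
        | succ m ihm =>
          have h1 := ihm (by omega)
          have hnd : ¬ b ∣ (k*b + 1 + m) := by
            intro hdvd
            have hd2 : b ∣ (1 + m) := by
              have heq : k*b + 1 + m = b*k + (1+m) := by ring
              rw [heq] at hdvd
              exact (Nat.dvd_add_right (Dvd.intro k rfl)).1 hdvd
            have := Nat.le_of_dvd (by omega) hd2
            omega
          have h2 := hUB1 _ hnd
          calc L (k*b+1) ≤ r^m * L (k*b+1+m) := h1
            _ ≤ r^m * (r * L (k*b+1+m+1)) :=
                mul_le_mul_of_nonneg_left h2 (pow_nonneg hr0.le m)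
            _ = r^(m+1) * L (k*b+1+(m+1)) := by rw [pow_succ]; ring_nf
      have h3 := inner (b-1) le_rfl
      have hidx : k*b + 1 + (b-1) = (k+1)*b := by
        have hbb : 1 + (b-1) = b := by omega
        calc k*b + 1 + (b-1) = k*b + (1 + (b-1)) := by ring
          _ = k*b + b := by rw [hbb]
          _ = (k+1)*b := by ring
      rw [hidx] at h3
      have h4 := hUB2 (k*b)
      have h5 : r * L (k*b+1) ≤ r * (r^(b-1) * L ((k+1)*b)) :=
        mul_le_mul_of_nonneg_left h3 hr0.le
      have h6 : r * (r^(b-1) * L ((k+1)*b)) = r^b * L ((k+1)*b) := by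
        calc r * (r^(b-1) * L ((k+1)*b)) = r^(b-1) * r * L ((k+1)*b) := by ring
          _ = r^((b-1)+1) * L ((k+1)*b) := by rw [pow_succ]
          _ = r^b * L ((k+1)*b) := by congr 2; omega
      have hstep : L (k*b) ≤ 2*r^b * L ((k+1)*b) := by
        nlinarith [h4, h5, h6]
      calc L 0 ≤ (2*r^b)^k * L (k*b) := ih
        _ ≤ (2*r^b)^k * (2*r^b * L ((k+1)*b)) :=
            mul_le_mul_of_nonneg_left hstep (pow_nonneg h2rb0 k)
        _ = (2*r^b)^(k+1) * L ((k+1)*b) := by rw [pow_succ]; ring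
  -- conclude r^b ≥ 1/2
  have hhalf : (1:ℝ)/2 ≤ r^b := by
    by_contra hlt
    push_neg at hlt
    have h2rb : 2*r^b < 1 := by linarith
    obtain ⟨k, hk⟩ := exists_pow_lt_of_lt_one (show (0:ℝ) < ell/D by positivity) h2rb
    have h1 := hchain k
    have h2 : (2*r^b)^k * L (k*b) ≤ (2*r^b)^k * D :=
      mul_le_mul_of_nonneg_left (hLD (k*b)) (pow_nonneg h2rb0 k)
    have h3 : (2*r^b)^k * D < ell := by
      rw [← lt_div_iff₀ hDpos]
      exact hk
    linarith
  -- final rpow computation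
  have hbR : (0:ℝ) < b := by exact_mod_cast hb1
  have h1 : ((1:ℝ)/2) ^ ((1:ℝ)/b) ≤ (r^b : ℝ) ^ ((1:ℝ)/b) :=
    Real.rpow_le_rpow (by norm_num) hhalf (by positivity)
  have h2 : (r^b : ℝ) ^ ((1:ℝ)/b) = r := by
    rw [← Real.rpow_natCast r b, ← Real.rpow_mul hr0.le]
    rw [mul_one_div, div_self (ne_of_gt hbR), Real.rpow_one]
  have h3 : ((1:ℝ)/2) ^ ((1:ℝ)/b) = (2:ℝ) ^ (-(1:ℝ)/b) := by
    rw [neg_div, Real.rpow_neg (by norm_num : (0:ℝ) ≤ 2)]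
    rw [show (1:ℝ)/2 = 2⁻¹ by norm_num, Real.inv_rpow (by norm_num : (0:ℝ) ≤ 2)]
  rw [← h3, ← h2]
  exact h1
end

section
/- For any n ≥ 2 and c ∈ ℂ with 0 < |c| < 1: if the limit set Λ_{n,c} is convex, then |c| ≥ 1/2. -/
theorem convex_implies_half (n : ℕ) (hn : 2 ≤ n) (c : ℂ)
    (hc0 : 0 < ‖c‖) (hc1 : ‖c‖ < 1)
    (Λ : Set ℂ) (hne : Λ.Nonempty) (hcomp : IsCompact Λ)
    (hinv : Λ = ⋃ j : Fin n, (fun z => c * z + xi n ^ (j : ℕ)) '' Λ)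
    (hconv : Convex ℝ Λ) :
    (1 : ℝ) / 2 ≤ ‖c‖ := by
  have hnNat : (n : ℕ) ≠ 0 := by omega
  have hn0 : (n : ℂ) ≠ 0 := Nat.cast_ne_zero.2 hnNat
  have hn0' : (n : ℝ) ≠ 0 := Nat.cast_ne_zero.2 hnNat
  -- xi n ^ n = 1
  have hxin : xi n ^ n = 1 := by
    unfold xi
    rw [← Complex.exp_nat_mul]
    rw [show (n : ℂ) * (2 * Real.pi * Complex.I / n) = 2 * Real.pi * Complex.I by
      field_simp]
    exact Complex.exp_two_pi_mul_I
  -- xi n ≠ 1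
  have hxi_ne : xi n ≠ 1 := by
    unfold xi
    intro h
    rw [Complex.exp_eq_one_iff] at h
    obtain ⟨k, hk⟩ := h
    have h2 : (2 * (Real.pi : ℂ) * Complex.I) ≠ 0 := by
      simp [Complex.I_ne_zero, Real.pi_ne_zero]
    have h3 : (2 * (Real.pi : ℂ) * Complex.I) * ((k : ℂ) * n)
        = (2 * (Real.pi : ℂ) * Complex.I) * 1 := by
      have h4 := congrArg (fun z => z * (n : ℂ)) hk
      simp only [div_mul_cancel₀ _ hn0] at h4
      linear_combination -h4
    have hkc : ((k : ℂ) * n) = 1 := mul_left_cancel₀ h2 h3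
    have hkZ : k * (n : ℤ) = 1 := by exact_mod_cast hkc
    have hn2 : (2 : ℤ) ≤ (n : ℤ) := by exact_mod_cast hn
    rcases le_or_gt k 0 with hk0 | hk0
    · nlinarith
    · nlinarith
  -- sum of powers of xi is 0
  have hsum : ∑ j ∈ Finset.range n, xi n ^ j = 0 := by
    rw [geom_sum_eq hxi_ne, hxin]
    simp
  -- |xi n| = 1
  have hxiabs : ‖xi n‖ = 1 := by
    unfold xi
    rw [show (2 * (Real.pi : ℂ) * Complex.I / n) = ((2 * Real.pi / n : ℝ) : ℂ) * Complex.I by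
      push_cast; ring]
    exact Complex.norm_exp_ofReal_mul_I _
  -- each map sends Λ into Λ
  have hmap : ∀ (j : Fin n), ∀ z ∈ Λ, c * z + xi n ^ (j : ℕ) ∈ Λ := by
    intro j z hz
    rw [hinv]
    exact Set.mem_iUnion.2 ⟨j, ⟨z, hz, rfl⟩⟩
  -- Λ is invariant under multiplication by c
  have hmul : ∀ z ∈ Λ, c * z ∈ Λ := by
    intro z hz
    have key := hconv.sum_mem (t := Finset.univ) (w := fun _ : Fin n => (1 : ℝ) / n)
      (fun i _ => by positivity)
      (by
        rw [Finset.sum_const, Finset.card_univ, Fintype.card_fin, nsmul_eq_mul]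
        field_simp)
      (z := fun i : Fin n => c * z + xi n ^ (i : ℕ))
      (fun i _ => hmap i z hz)
    have hcomb : ∑ i : Fin n, ((1 : ℝ) / n) • (c * z + xi n ^ (i : ℕ)) = c * z := by
      rw [← Finset.smul_sum, Finset.sum_add_distrib, Finset.sum_const, Finset.card_univ,
        Fintype.card_fin, Fin.sum_univ_eq_sum_range (fun j => xi n ^ j), hsum, add_zero,
        nsmul_eq_mul, Complex.real_smul]
      push_cast
      field_simp
    rwa [hcomb] at key
  -- 0 ∈ Λ
  obtain ⟨z0, hz0⟩ := hne
  have hpow : ∀ k : ℕ, c ^ k * z0 ∈ Λ := by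
    intro k
    induction k with
    | zero => simpa using hz0
    | succ k ih =>
        have := hmul _ ih
        have heq : c * (c ^ k * z0) = c ^ (k + 1) * z0 := by ring
        rwa [heq] at this
  have htend : Filter.Tendsto (fun k : ℕ => c ^ k * z0) Filter.atTop (nhds 0) := by
    have h1 : Filter.Tendsto (fun k : ℕ => c ^ k) Filter.atTop (nhds 0) :=
      tendsto_pow_atTop_nhds_zero_of_norm_lt_one (by simpa using hc1)
    simpa using h1.mul_const z0
  have h0 : (0 : ℂ) ∈ Λ :=
    hcomp.isClosed.mem_of_tendsto htend (Filter.Eventually.of_forall hpow)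
  -- max modulus on Λ
  obtain ⟨zm, hzm, hmax⟩ := hcomp.exists_isMaxOn ⟨z0, hz0⟩
    continuous_norm.continuousOn
  set M := ‖zm‖ with hM
  have hMle : M ≤ ‖c‖ * M + 1 := by
    rw [hinv] at hzm
    obtain ⟨j, w, hw, hwe⟩ := Set.mem_iUnion.1 hzm
    calc M = ‖c * w + xi n ^ (j : ℕ)‖ := by rw [hM, ← hwe]
      _ ≤ ‖c * w‖ + ‖xi n ^ (j : ℕ)‖ := norm_add_le _ _
      _ = ‖c‖ * ‖w‖ + 1 := by
          rw [norm_mul, norm_pow, hxiabs, one_pow]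
      _ ≤ ‖c‖ * M + 1 := by
          have h5 : ‖w‖ ≤ M := hmax hw
          have h6 := mul_le_mul_of_nonneg_left h5 (norm_nonneg c)
          linarith
  -- 0 = c y + xi^j for some y ∈ Λ
  rw [hinv] at h0
  obtain ⟨j, y, hy, hye⟩ := Set.mem_iUnion.1 h0
  have hcy : ‖c‖ * ‖y‖ = 1 := by
    have : c * y = -(xi n ^ (j : ℕ)) := by linear_combination hye
    have h := congrArg (fun z : ℂ => ‖z‖) this
    simp only [norm_mul, norm_neg, norm_pow, hxiabs, one_pow] at h
    exact h
  have hyM : ‖y‖ ≤ M := hmax hy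
  have hM0 : 0 ≤ M := norm_nonneg zm
  nlinarith [norm_nonneg c, norm_nonneg y,
    mul_le_mul_of_nonneg_left hyM (norm_nonneg c)]
end
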